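/- arXiv:1711.08181 — 4 statements merged into one kernel-verified Lean document; each statement's English description precedes it below -/
import Mathlib

section
/- Let K ≥ 1 and L ≥ 1 be integers and let a = (a_0, …, a_K) be real numbers with L vanishing moments: ∑_{k=0}^{K} k^q a_k = 0 for all q ∈ {0, …, L} (with 0^0 = 1) and ∑_{k=0}^{K} k^{L+1} a_k ≠ 0. Let 0 < α ≤ 2 and H₀ ∈ (0,1). Then ∫_ℝ |∑_{p=0}^{K} a_p |p − s|^{H₀ − 1/α}|^α ds < ∞. -/
open MeasureTheory

private lemma mvt_rpow {β m x y : ℝ} (hβ : β ≤ 1) (hm : 0 < m) (hx : m ≤ x) (hy : m ≤ y) :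
    |x ^ β - y ^ β| ≤ |β| * m ^ (β - 1) * |x - y| := by
  have key : ∀ t ∈ Set.Ici m, HasDerivWithinAt (fun u : ℝ => u ^ β) (β * t ^ (β - 1))
      (Set.Ici m) t := fun t ht =>
    (Real.hasDerivAt_rpow_const (Or.inl (hm.trans_le ht).ne')).hasDerivWithinAt
  have bound : ∀ t ∈ Set.Ici m, ‖β * t ^ (β - 1)‖ ≤ |β| * m ^ (β - 1) := by
    intro t ht
    rw [norm_mul, Real.norm_eq_abs, Real.norm_eq_abs,
      abs_of_nonneg (Real.rpow_nonneg (hm.le.trans ht) _)]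
    exact mul_le_mul_of_nonneg_left (Real.rpow_le_rpow_of_nonpos hm ht (by linarith))
      (abs_nonneg β)
  have h := (convex_Ici m).norm_image_sub_le_of_norm_hasDerivWithin_le key bound hy hx
  simpa [Real.norm_eq_abs] using h

private lemma sum_rpow_le (n : ℕ) (y : ℕ → ℝ) (hy : ∀ p, 0 ≤ y p) {α : ℝ} (hα : 0 < α) :
    (∑ p ∈ Finset.range n, y p) ^ α ≤ (n : ℝ) ^ α * ∑ p ∈ Finset.range n, y p ^ α := by
  rcases Nat.eq_zero_or_pos n with hn | hn
  · subst hn; simp [Real.zero_rpow hα.ne']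
  obtain ⟨p₀, hp₀, hmax⟩ := Finset.exists_max_image (Finset.range n) y
    ⟨0, Finset.mem_range.mpr hn⟩
  calc (∑ p ∈ Finset.range n, y p) ^ α ≤ ((n : ℝ) * y p₀) ^ α := by
        apply Real.rpow_le_rpow (Finset.sum_nonneg fun i _ => hy i) ?_ hα.le
        calc ∑ p ∈ Finset.range n, y p ≤ ∑ _p ∈ Finset.range n, y p₀ :=
              Finset.sum_le_sum fun i hi => hmax i hi
          _ = (n : ℝ) * y p₀ := by simp [mul_comm]
    _ = (n : ℝ) ^ α * y p₀ ^ α := Real.mul_rpow (Nat.cast_nonneg n) (hy p₀)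
    _ ≤ _ := mul_le_mul_of_nonneg_left
        (Finset.single_le_sum (fun i _ => Real.rpow_nonneg (hy i) α) hp₀)
        (Real.rpow_nonneg (Nat.cast_nonneg n) α)

private lemma integrableOn_abs_sub_rpow {c A B γ : ℝ} (hγ : -1 < γ) (hA : A ≤ c) (hB : c ≤ B) :
    IntegrableOn (fun s : ℝ => |c - s| ^ γ) (Set.Ioc A B) := by
  rw [← Set.Ioc_union_Ioc_eq_Ioc hA hB]
  apply IntegrableOn.union
  · have h1 : IntervalIntegrable (fun x : ℝ => (c - x) ^ γ) volume A c := by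
      simpa using ((intervalIntegral.intervalIntegrable_rpow' hγ (a := 0) (b := c - A)).comp_sub_left c).symm
    rw [intervalIntegrable_iff_integrableOn_Ioc_of_le hA] at h1
    exact h1.congr_fun (fun s hs => by
      rw [abs_of_nonneg (by linarith [hs.2] : (0:ℝ) ≤ c - s)]) measurableSet_Ioc
  · have h1 : IntervalIntegrable (fun x : ℝ => (x - c) ^ γ) volume c B := by
      simpa using (intervalIntegral.intervalIntegrable_rpow' hγ (a := 0) (b := B - c)).comp_sub_right c
    rw [intervalIntegrable_iff_integrableOn_Ioc_of_le hB] at h1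
    exact h1.congr_fun (fun s hs => by
      rw [abs_of_nonpos (by linarith [hs.1] : c - s ≤ 0), neg_sub]) measurableSet_Ioc

private lemma tail_bound (K : ℕ) (a : ℕ → ℝ)
    (hsum0 : ∑ p ∈ Finset.range (K + 1), a p = 0) {β : ℝ} (hβ : β ≤ 1) {m c s : ℝ}
    (hm : 0 < m) (hc : m ≤ c)
    (hx : ∀ p ∈ Finset.range (K + 1), m ≤ |(p : ℝ) - s| ∧ |(|(p : ℝ) - s|) - c| ≤ K) :
    |∑ p ∈ Finset.range (K + 1), a p * |(p : ℝ) - s| ^ β| ≤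
      (∑ p ∈ Finset.range (K + 1), |a p|) * (|β| * m ^ (β - 1) * K) := by
  have hrw : ∑ p ∈ Finset.range (K + 1), a p * |(p : ℝ) - s| ^ β =
      ∑ p ∈ Finset.range (K + 1), a p * (|(p : ℝ) - s| ^ β - c ^ β) := by
    simp only [mul_sub]
    rw [Finset.sum_sub_distrib, ← Finset.sum_mul, hsum0, zero_mul, sub_zero]
  rw [hrw]
  calc |∑ p ∈ Finset.range (K + 1), a p * (|(p : ℝ) - s| ^ β - c ^ β)|
      ≤ ∑ p ∈ Finset.range (K + 1), |a p * (|(p : ℝ) - s| ^ β - c ^ β)| :=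
        Finset.abs_sum_le_sum_abs _ _
    _ ≤ ∑ p ∈ Finset.range (K + 1), |a p| * (|β| * m ^ (β - 1) * K) := by
        apply Finset.sum_le_sum
        intro p hp
        rw [abs_mul]
        refine mul_le_mul_of_nonneg_left ?_ (abs_nonneg _)
        calc |(|(p : ℝ) - s|) ^ β - c ^ β| ≤ |β| * m ^ (β - 1) * |(|(p : ℝ) - s|) - c| :=
              mvt_rpow hβ hm (hx p hp).1 hc
          _ ≤ |β| * m ^ (β - 1) * K := by
              refine mul_le_mul_of_nonneg_left (hx p hp).2 ?_
              positivity
    _ = (∑ p ∈ Finset.range (K + 1), |a p|) * (|β| * m ^ (β - 1) * K) := by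
        rw [← Finset.sum_mul]

theorem kernel_integral_finite
    (K L : ℕ) (hK : 1 ≤ K) (hL : 1 ≤ L) (a : ℕ → ℝ)
    (hmom : ∀ q ≤ L, ∑ k ∈ Finset.range (K + 1), (k : ℝ) ^ q * a k = 0)
    (hmom' : ∑ k ∈ Finset.range (K + 1), (k : ℝ) ^ (L + 1) * a k ≠ 0)
    (α : ℝ) (hα : 0 < α) (hα2 : α ≤ 2) (H₀ : ℝ) (hH₀ : H₀ ∈ Set.Ioo (0 : ℝ) 1) :
    ∫⁻ s : ℝ, ENNReal.ofReal
        (|∑ p ∈ Finset.range (K + 1), a p * |(p : ℝ) - s| ^ (H₀ - 1 / α)| ^ α) < ⊤ := by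
  obtain ⟨hH₀0, hH₀1⟩ := hH₀
  set β : ℝ := H₀ - 1 / α with hβdef
  have hαinv : (1:ℝ)/2 ≤ 1 / α := by
    rw [div_le_div_iff₀ (by norm_num) hα]; linarith
  have hβ1 : β ≤ 1 := by
    simp only [hβdef]; linarith
  set f : ℝ → ℝ := fun s => ∑ p ∈ Finset.range (K + 1), a p * |(p : ℝ) - s| ^ β with hfdef
  set g : ℝ → ℝ := fun s => |f s| ^ α with hgdef
  have hfm : Measurable f :=
    Finset.measurable_sum _ fun p _ =>
      (((measurable_const.sub measurable_id).abs.pow_const β).const_mul _)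
  have hgm : Measurable g := hfm.abs.pow_const α
  have hg0 : ∀ s, 0 ≤ g s := fun s => Real.rpow_nonneg (abs_nonneg _) _
  have hsum0 : ∑ p ∈ Finset.range (K + 1), a p = 0 := by
    have h := hmom 0 (Nat.zero_le L)
    simpa using h
  set R : ℝ := 2 * (K : ℝ) + 2 with hRdef
  have hR0 : (0:ℝ) < R := by positivity
  have hKR : (K : ℝ) < R := by
    have : (0:ℝ) ≤ (K:ℝ) := Nat.cast_nonneg K
    simp only [hRdef]; linarith
  have hpK : ∀ p ∈ Finset.range (K + 1), (p : ℝ) ≤ K := fun p hp =>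
    Nat.cast_le.mpr (Nat.lt_succ_iff.mp (Finset.mem_range.mp hp))
  set C₀ : ℝ := ∑ p ∈ Finset.range (K + 1), |a p| with hC₀
  have hC₀0 : 0 ≤ C₀ := Finset.sum_nonneg fun i _ => abs_nonneg _
  set rr : ℝ := (β - 1) * α with hrr
  have hrrlt : rr < -1 := by
    have hβα : rr = H₀ * α - 1 - α := by
      simp only [hrr, hβdef]; field_simp
    rw [hβα]
    nlinarith [mul_pos (sub_pos.mpr hH₀1) hα]
  -- the common tail constant
  set C₁ : ℝ := C₀ * (|β| * K) with hC₁
  have hC₁0 : 0 ≤ C₁ := by positivity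
  -- middle part
  have hmid : IntegrableOn g (Set.Ioc (-R) R) := by
    set γ : ℝ := H₀ * α - 1 with hγdef
    have hγ : -1 < γ := by
      simp only [hγdef]; nlinarith [mul_pos hH₀0 hα]
    have hβα : β * α = γ := by
      simp only [hβdef, hγdef]; field_simp
    have hbound_int : IntegrableOn
        (fun s : ℝ => ((K:ℝ) + 1) ^ α * ∑ p ∈ Finset.range (K + 1),
          |a p| ^ α * |(p : ℝ) - s| ^ γ) (Set.Ioc (-R) R) := by
      apply Integrable.const_mul
      apply integrable_finset_sum
      intro p hp
      exact (integrableOn_abs_sub_rpow hγ (by linarith [hpK p hp, Nat.cast_nonneg (α := ℝ) p] :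
        -R ≤ (p:ℝ)) (by linarith [hpK p hp])).const_mul _
    apply hbound_int.mono' (hgm.aestronglyMeasurable.restrict)
    apply ae_of_all
    intro s
    have h1 : |f s| ≤ ∑ p ∈ Finset.range (K + 1), |a p| * |(p : ℝ) - s| ^ β := by
      refine (Finset.abs_sum_le_sum_abs _ _).trans (le_of_eq ?_)
      apply Finset.sum_congr rfl
      intro p _
      rw [abs_mul, abs_of_nonneg (Real.rpow_nonneg (abs_nonneg _) _)]
    have h2 : g s ≤ (∑ p ∈ Finset.range (K + 1), |a p| * |(p : ℝ) - s| ^ β) ^ α :=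
      Real.rpow_le_rpow (abs_nonneg _) h1 hα.le
    have h3 := sum_rpow_le (K + 1) (fun p => |a p| * |(p : ℝ) - s| ^ β)
      (fun p => mul_nonneg (abs_nonneg _) (Real.rpow_nonneg (abs_nonneg _) _)) hα
    rw [Real.norm_eq_abs, abs_of_nonneg (hg0 s)]
    refine (h2.trans (h3.trans (le_of_eq ?_)))
    push_cast
    congr 1
    apply Finset.sum_congr rfl
    intro p _
    rw [Real.mul_rpow (abs_nonneg _) (Real.rpow_nonneg (abs_nonneg _) _),
      ← Real.rpow_mul (abs_nonneg _), hβα]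
  -- positive tail
  have hplus : IntegrableOn g (Set.Ioi R) := by
    have hbound_int : IntegrableOn
        (fun s : ℝ => (C₁ ^ α / (2:ℝ) ^ rr) * s ^ rr) (Set.Ioi R) :=
      (integrableOn_Ioi_rpow_of_lt hrrlt hR0).const_mul _
    apply hbound_int.mono' (hgm.aestronglyMeasurable.restrict)
    rw [ae_restrict_iff' measurableSet_Ioi]
    apply ae_of_all
    intro s hs
    rw [Set.mem_Ioi] at hs
    have hs0 : 0 < s := hR0.trans hs
    have hm0 : (0:ℝ) < s / 2 := by linarith
    have habs : |f s| ≤ C₀ * (|β| * (s/2) ^ (β - 1) * K) := by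
      apply tail_bound K a hsum0 hβ1 hm0 (by linarith : s / 2 ≤ s)
      intro p hp
      have hpK' := hpK p hp
      have hps : |(p : ℝ) - s| = s - p := by
        rw [abs_sub_comm, abs_of_nonneg (by linarith)]
      constructor
      · rw [hps]; linarith
      · rw [hps]
        have : s - (p:ℝ) - s = -(p:ℝ) := by ring
        rw [this, abs_neg, abs_of_nonneg (Nat.cast_nonneg p)]
        exact hpK'
    have habs' : |f s| ≤ C₁ * (s/2) ^ (β - 1) := by
      refine habs.trans (le_of_eq ?_)
      simp only [hC₁]; ring
    rw [Real.norm_eq_abs, abs_of_nonneg (hg0 s)]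
    calc g s ≤ (C₁ * (s/2) ^ (β - 1)) ^ α :=
          Real.rpow_le_rpow (abs_nonneg _) habs' hα.le
      _ = C₁ ^ α * (s/2) ^ rr := by
          rw [Real.mul_rpow hC₁0 (Real.rpow_nonneg hm0.le _),
            ← Real.rpow_mul hm0.le]
      _ = (C₁ ^ α / (2:ℝ) ^ rr) * s ^ rr := by
          rw [Real.div_rpow hs0.le (by norm_num : (0:ℝ) ≤ 2)]
          ring
  -- negative tail
  have hminus : IntegrableOn g (Set.Iic (-R)) := by
    have hneg : IntegrableOn (fun s : ℝ => (-s) ^ rr) (Set.Iic (-R)) := by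
      have h1 : IntegrableOn (fun t : ℝ => t ^ rr) (Set.Ici R) :=
        (integrableOn_Ioi_rpow_of_lt hrrlt hR0).congr_set_ae Ioi_ae_eq_Ici.symm
      have h2 : Integrable ((Set.Ici R).indicator fun t : ℝ => t ^ rr) :=
        (integrable_indicator_iff measurableSet_Ici).mpr h1
      have h3 := h2.comp_neg
      have h4 : (fun s : ℝ => ((Set.Ici R).indicator fun t : ℝ => t ^ rr) (-s)) =
          (Set.Iic (-R)).indicator fun s : ℝ => (-s) ^ rr := by
        ext s
        by_cases h : s ≤ -R
        · rw [Set.indicator_of_mem (Set.mem_Ici.mpr (by linarith) : -s ∈ Set.Ici R),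
            Set.indicator_of_mem (Set.mem_Iic.mpr h)]
        · have h' := lt_of_not_ge h
          rw [Set.indicator_of_notMem (by rw [Set.mem_Ici, not_le]; linarith),
            Set.indicator_of_notMem (by simpa using h)]
      rw [h4] at h3
      exact (integrable_indicator_iff measurableSet_Iic).mp h3
    have hbound_int : IntegrableOn
        (fun s : ℝ => C₁ ^ α * (-s) ^ rr) (Set.Iic (-R)) := hneg.const_mul _
    apply hbound_int.mono' (hgm.aestronglyMeasurable.restrict)
    rw [ae_restrict_iff' measurableSet_Iic]
    apply ae_of_all
    intro s hs
    rw [Set.mem_Iic] at hs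
    have hs0 : 0 < -s := by linarith
    have habs : |f s| ≤ C₀ * (|β| * (-s) ^ (β - 1) * K) := by
      apply tail_bound K a hsum0 hβ1 hs0 (le_refl (-s))
      intro p hp
      have hpK' := hpK p hp
      have hp0 : (0:ℝ) ≤ (p:ℝ) := Nat.cast_nonneg p
      have hps : |(p : ℝ) - s| = (p:ℝ) - s := abs_of_nonneg (by linarith)
      constructor
      · rw [hps]; linarith
      · rw [hps]
        have : (p:ℝ) - s - -s = (p:ℝ) := by ring
        rw [this, abs_of_nonneg hp0]
        exact hpK'
    have habs' : |f s| ≤ C₁ * (-s) ^ (β - 1) := by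
      refine habs.trans (le_of_eq ?_)
      simp only [hC₁]; ring
    rw [Real.norm_eq_abs, abs_of_nonneg (hg0 s)]
    calc g s ≤ (C₁ * (-s) ^ (β - 1)) ^ α :=
          Real.rpow_le_rpow (abs_nonneg _) habs' hα.le
      _ = C₁ ^ α * (-s) ^ rr := by
          rw [Real.mul_rpow hC₁0 (Real.rpow_nonneg hs0.le _),
            ← Real.rpow_mul hs0.le]
  have hInt : Integrable g := by
    rw [← integrableOn_univ]
    have hu : Set.Iic (-R) ∪ (Set.Ioc (-R) R ∪ Set.Ioi R) = Set.univ := by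
      rw [Set.Ioc_union_Ioi_eq_Ioi (by linarith), Set.Iic_union_Ioi]
    rw [← hu]
    exact hminus.union (hmid.union hplus)
  exact hInt.lintegral_lt_top
end

section
/- Let 0 < α ≤ 2, let 0 < h₋ ≤ h₊ < 1, and let U ⊂ ℝ be a compact set. For t ∈ U, s ∈ ℝ with s ∉ {0, t} and η ∈ [h₋, h₊], set φ(t, s, η) = |t − s|^{η − 1/α} ln|t − s| − |s|^{η − 1/α} ln|s|. Then sup_{t ∈ U} ∫_ℝ ( sup_{η ∈ [h₋, h₊]} |φ(t, s, η)| )^α ds < ∞. -/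
open MeasureTheory
open scoped ENNReal

/-- The η-derivative kernel φ(t,s,η) = |t−s|^{η−1/α} ln|t−s| − |s|^{η−1/α} ln|s|. -/
noncomputable def phiKer (α t s η : ℝ) : ℝ :=
  |t - s| ^ (η - 1 / α) * Real.log |t - s| - |s| ^ (η - 1 / α) * Real.log |s|

namespace UniformDomAux

open Set Real

/-- `(a+b)^p ≤ 2^p (a^p + b^p)` in `ℝ≥0∞`. -/
lemma ennreal_add_rpow_le {a b : ℝ≥0∞} {p : ℝ} (hp : 0 ≤ p) :
    (a + b) ^ p ≤ 2 ^ p * (a ^ p + b ^ p) := by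
  calc (a + b) ^ p ≤ (2 * max a b) ^ p := by
        apply ENNReal.rpow_le_rpow _ hp
        rw [two_mul]
        exact add_le_add (le_max_left a b) (le_max_right a b)
    _ = 2 ^ p * max a b ^ p := ENNReal.mul_rpow_of_nonneg _ _ hp
    _ ≤ 2 ^ p * (a ^ p + b ^ p) := by
        gcongr
        rcases le_total a b with h | h
        · rw [max_eq_right h]; exact le_add_self
        · rw [max_eq_left h]; exact le_self_add

lemma ofReal_mul_rpow {c x p : ℝ} (hc : 0 ≤ c) (hx : 0 ≤ x) (hp : 0 ≤ p) :
    ENNReal.ofReal (c * x) ^ p = ENNReal.ofReal (c ^ p) * ENNReal.ofReal (x ^ p) := by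
  rw [ENNReal.ofReal_mul hc, ENNReal.mul_rpow_of_nonneg _ _ hp,
    ENNReal.ofReal_rpow_of_nonneg hc hp, ENNReal.ofReal_rpow_of_nonneg hx hp]

/-- Integral of an even function as twice the integral over the positive half line. -/
lemma lintegral_comp_abs (Ψ : ℝ → ℝ≥0∞) (hΨ : Measurable Ψ) :
    ∫⁻ x : ℝ, Ψ |x| = 2 * ∫⁻ x in Set.Ioi (0 : ℝ), Ψ x := by
  have h0 : ∫⁻ x : ℝ, Ψ |x|
      = (∫⁻ x in Set.Iio (0 : ℝ), Ψ |x|) + ∫⁻ x in Set.Ici (0 : ℝ), Ψ |x| := by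
    rw [← compl_Iio (a := (0 : ℝ))]
    exact (lintegral_add_compl _ measurableSet_Iio).symm
  have h1 : ∫⁻ x in Set.Iio (0 : ℝ), Ψ |x| = ∫⁻ x in Set.Ioi (0 : ℝ), Ψ x := by
    have hmp := Measure.measurePreserving_neg (volume : Measure ℝ)
    have hemb : MeasurableEmbedding (fun x : ℝ => -x) :=
      (MeasurableEquiv.neg ℝ).measurableEmbedding
    have hpre : (fun x : ℝ => -x) ⁻¹' Set.Iio (0 : ℝ) = Set.Ioi (0 : ℝ) := by
      ext x; simp
    have h2 := hmp.setLIntegral_comp_preimage_emb hemb (fun x => Ψ |x|) (Set.Iio (0 : ℝ))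
    rw [hpre] at h2
    rw [← h2]
    refine setLIntegral_congr_fun measurableSet_Ioi ?_
    intro x hx
    simp only [abs_neg, abs_of_pos (show (0:ℝ) < x from hx)]
  have h2 : ∫⁻ x in Set.Ici (0 : ℝ), Ψ |x| = ∫⁻ x in Set.Ioi (0 : ℝ), Ψ x := by
    rw [← setLIntegral_congr (Ioi_ae_eq_Ici (a := (0 : ℝ)))]
    refine setLIntegral_congr_fun measurableSet_Ioi ?_
    intro x hx
    simp only [abs_of_pos (show (0:ℝ) < x from hx)]
  rw [h0, h1, h2, two_mul]

/-- `|x|^β |log x| ≤ (|x|^a + |x|^b) |log x|` for `a ≤ β ≤ b`. -/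
lemma rpow_abs_log_le {a b x β : ℝ} (hab : a ≤ β) (hβb : β ≤ b) :
    |x| ^ β * |Real.log (|x|)| ≤ (|x| ^ a + |x| ^ b) * |Real.log (|x|)| := by
  rcases eq_or_ne x 0 with rfl | hx
  · simp
  apply mul_le_mul_of_nonneg_right _ (abs_nonneg _)
  have hx0 : 0 < |x| := abs_pos.mpr hx
  rcases le_total |x| 1 with h | h
  · exact le_add_of_le_of_nonneg (Real.rpow_le_rpow_of_exponent_ge hx0 h hab)
      (Real.rpow_nonneg (abs_nonneg x) b)
  · exact le_add_of_nonneg_of_le (Real.rpow_nonneg (abs_nonneg x) a)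
      (Real.rpow_le_rpow_of_exponent_le h hβb)

/-- near/universal bound: `|phiKer α t s η| ≤ W(t-s) + W(s)`. -/
lemma phiKer_le_W {α t s η a b : ℝ} (hab : a ≤ η - 1 / α) (hβb : η - 1 / α ≤ b) :
    |phiKer α t s η| ≤ (|t - s| ^ a + |t - s| ^ b) * |Real.log (|t - s|)|
      + (|s| ^ a + |s| ^ b) * |Real.log (|s|)| := by
  have h1 : |phiKer α t s η| ≤ |t - s| ^ (η - 1 / α) * |Real.log (|t - s|)|
      + |s| ^ (η - 1 / α) * |Real.log (|s|)| := by
    refine (abs_sub _ _).trans ?_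
    rw [abs_mul, abs_mul, abs_of_nonneg (Real.rpow_nonneg (abs_nonneg _) _),
      abs_of_nonneg (Real.rpow_nonneg (abs_nonneg _) _)]
  exact h1.trans (add_le_add (rpow_abs_log_le hab hβb) (rpow_abs_log_le hab hβb))

/-- Far bound via the mean value theorem, positive side. -/
lemma far_bound {β b1 B ε R t s : ℝ} (hb : β ≤ b1) (hb1 : b1 < 1) (hβB : |β| ≤ B)
    (hB1 : 1 ≤ B) (hε : 0 < ε) (hR : 1 ≤ R) (ht : |t| ≤ R) (hs : 2 * R + 2 < s) :
    |(|t - s| ^ β * Real.log |t - s| - |s| ^ β * Real.log |s|)|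
      ≤ R * (2 ^ (1 - b1 + ε) * (B / ε + 1)) * s ^ (b1 - 1 + ε) := by
  obtain ⟨htR1, htR2⟩ := abs_le.mp ht
  have hB0 : (0 : ℝ) ≤ B := zero_le_one.trans hB1
  have hs0 : (0 : ℝ) < s := by linarith
  have hs2 : (2 : ℝ) ≤ s / 2 := by linarith
  set S : Set ℝ := Set.Icc (s - R) (s + R) with hS
  have hmem : ∀ x ∈ S, s / 2 ≤ x ∧ x ≤ 2 * s := by
    intro x hx
    obtain ⟨h1, h2⟩ := hx
    constructor <;> linarith
  set C : ℝ := 2 ^ (1 - b1 + ε) * (B / ε + 1) * s ^ (b1 - 1 + ε) with hC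
  set f' : ℝ → ℝ := fun x => β * x ^ (β - 1) * Real.log x + x ^ β * x⁻¹ with hf'
  have hder : ∀ x ∈ S, HasDerivWithinAt (fun y => |y| ^ β * Real.log |y|) (f' x) S x := by
    intro x hx
    have hx0 : 0 < x := lt_of_lt_of_le (by linarith) (hmem x hx).1
    have h1 : HasDerivAt (fun y : ℝ => y ^ β * Real.log y)
        (β * x ^ (β - 1) * Real.log x + x ^ β * x⁻¹) x :=
      (Real.hasDerivAt_rpow_const (Or.inl hx0.ne')).mul (Real.hasDerivAt_log hx0.ne')
    refine h1.hasDerivWithinAt.congr (fun y hy => ?_) ?_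
    · have hy0 : 0 < y := lt_of_lt_of_le (by linarith) (hmem y hy).1
      rw [abs_of_pos hy0]
    · rw [abs_of_pos hx0]
  have h2spos : (0 : ℝ) < 2 * s := by linarith
  have h2s1 : (1 : ℝ) ≤ (2 * s) ^ ε := by
    have h := Real.rpow_le_rpow zero_le_one (by linarith : (1 : ℝ) ≤ 2 * s) hε.le
    rwa [Real.one_rpow] at h
  have key : (s / 2) ^ (b1 - 1) * (2 * s) ^ ε = 2 ^ (1 - b1 + ε) * s ^ (b1 - 1 + ε) := by
    have e1 : (s / 2) ^ (b1 - 1) = s ^ (b1 - 1) / 2 ^ (b1 - 1) :=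
      Real.div_rpow hs0.le (by norm_num : (0:ℝ) ≤ 2) _
    have e2 : (2 * s) ^ ε = 2 ^ ε * s ^ ε := Real.mul_rpow (by norm_num : (0:ℝ) ≤ 2) hs0.le
    have e3 : s ^ (b1 - 1) * s ^ ε = s ^ (b1 - 1 + ε) := (Real.rpow_add hs0 _ _).symm
    have e4 : (2 : ℝ) ^ ε / 2 ^ (b1 - 1) = 2 ^ (1 - b1 + ε) := by
      rw [← Real.rpow_sub two_pos]
      congr 1
      ring
    calc (s / 2) ^ (b1 - 1) * (2 * s) ^ ε
        = (2 ^ ε / 2 ^ (b1 - 1)) * (s ^ (b1 - 1) * s ^ ε) := by rw [e1, e2]; ring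
      _ = 2 ^ (1 - b1 + ε) * s ^ (b1 - 1 + ε) := by rw [e3, e4]
  have hbd : ∀ x ∈ S, ‖f' x‖ ≤ C := by
    intro x hx
    obtain ⟨hx1, hx2⟩ := hmem x hx
    have hx0 : 0 < x := by linarith
    have hx1' : 1 ≤ x := by linarith
    have hlog0 : 0 ≤ Real.log x := Real.log_nonneg hx1'
    have hy0 : 0 ≤ x ^ (β - 1) := Real.rpow_nonneg hx0.le _
    have hxinv : x ^ β * x⁻¹ = x ^ (β - 1) := by
      rw [Real.rpow_sub hx0, Real.rpow_one, div_eq_mul_inv]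
    have step1 : ‖f' x‖ ≤ B * x ^ (β - 1) * Real.log x + x ^ (β - 1) := by
      rw [Real.norm_eq_abs, hf']
      simp only
      rw [hxinv]
      refine (abs_add_le _ _).trans ?_
      rw [abs_of_nonneg hy0, abs_mul, abs_mul, abs_of_nonneg hy0, abs_of_nonneg hlog0]
      have h5 : |β| * x ^ (β - 1) * Real.log x ≤ B * x ^ (β - 1) * Real.log x :=
        mul_le_mul_of_nonneg_right (mul_le_mul_of_nonneg_right hβB hy0) hlog0
      linarith
    have hlogle : Real.log x ≤ (2 * s) ^ ε / ε := by
      refine (Real.log_le_log hx0 hx2).trans ?_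
      exact Real.log_le_rpow_div (by linarith) hε
    have hpow : x ^ (β - 1) ≤ (s / 2) ^ (b1 - 1) := by
      have h1 : x ^ (β - 1) ≤ (s / 2) ^ (β - 1) :=
        Real.rpow_le_rpow_of_nonpos (by linarith) hx1 (by linarith)
      have h2 : (s / 2) ^ (β - 1) ≤ (s / 2) ^ (b1 - 1) :=
        Real.rpow_le_rpow_of_exponent_le (by linarith) (by linarith)
      linarith
    have hsp0 : 0 ≤ (s / 2) ^ (b1 - 1) := Real.rpow_nonneg (by linarith) _
    have t1 : B * x ^ (β - 1) * Real.log x ≤ B * ((s / 2) ^ (b1 - 1) * ((2 * s) ^ ε / ε)) := by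
      have := mul_le_mul (mul_le_mul_of_nonneg_left hpow hB0) hlogle hlog0
        (by positivity : (0:ℝ) ≤ B * (s / 2) ^ (b1 - 1))
      calc B * x ^ (β - 1) * Real.log x ≤ B * (s / 2) ^ (b1 - 1) * ((2 * s) ^ ε / ε) := this
        _ = B * ((s / 2) ^ (b1 - 1) * ((2 * s) ^ ε / ε)) := by ring
    have t2 : x ^ (β - 1) ≤ (s / 2) ^ (b1 - 1) * (2 * s) ^ ε := by
      calc x ^ (β - 1) ≤ (s / 2) ^ (b1 - 1) := hpow
        _ = (s / 2) ^ (b1 - 1) * 1 := (mul_one _).symm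
        _ ≤ (s / 2) ^ (b1 - 1) * (2 * s) ^ ε := by
            exact mul_le_mul_of_nonneg_left h2s1 hsp0
    calc ‖f' x‖ ≤ B * x ^ (β - 1) * Real.log x + x ^ (β - 1) := step1
      _ ≤ B * ((s / 2) ^ (b1 - 1) * ((2 * s) ^ ε / ε)) + (s / 2) ^ (b1 - 1) * (2 * s) ^ ε := by
          linarith
      _ = (s / 2) ^ (b1 - 1) * (2 * s) ^ ε * (B / ε + 1) := by
          field_simp
      _ = C := by rw [hC, key]; ring
  have hsin : s ∈ S := ⟨by linarith, by linarith⟩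
  have hstin : s - t ∈ S := ⟨by linarith, by linarith⟩
  have keymvt := Convex.norm_image_sub_le_of_norm_hasDerivWithin_le hder hbd
    (convex_Icc _ _) hsin hstin
  rw [Real.norm_eq_abs, Real.norm_eq_abs] at keymvt
  have habs : |s - t - s| = |t| := by rw [show s - t - s = -t by ring, abs_neg]
  rw [habs] at keymvt
  have hts : |t - s| = |s - t| := abs_sub_comm t s
  rw [hts]
  have hBε : (0 : ℝ) ≤ B / ε := div_nonneg hB0 hε.le
  have hC0 : (0 : ℝ) ≤ C :=
    mul_nonneg (mul_nonneg (Real.rpow_nonneg (by norm_num) _) (by linarith))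
      (Real.rpow_nonneg hs0.le _)
  calc |(|s - t| ^ β * Real.log |s - t| - |s| ^ β * Real.log |s|)| ≤ C * |t| := keymvt
    _ ≤ C * R := mul_le_mul_of_nonneg_left ht hC0
    _ = R * (2 ^ (1 - b1 + ε) * (B / ε + 1)) * s ^ (b1 - 1 + ε) := by rw [hC]; ring

end UniformDomAux

open UniformDomAux Set

set_option maxHeartbeats 1000000 in
theorem uniform_Lalpha_domination_of_derivative_kernel
    (α hlo hhi : ℝ) (hα : 0 < α) (hα2 : α ≤ 2)
    (hm : 0 < hlo) (hmm : hlo ≤ hhi) (hp : hhi < 1)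
    (U : Set ℝ) (hU : IsCompact U) :
    (⨆ t ∈ U, ∫⁻ s : ℝ,
        (⨆ η ∈ Set.Icc hlo hhi, ENNReal.ofReal |phiKer α t s η|) ^ α) < ⊤ := by
  classical
  obtain ⟨r, hr⟩ : ∃ r : ℝ, U ⊆ Metric.closedBall 0 r := hU.isBounded.subset_closedBall 0
  set R : ℝ := max r 1 with hRdef
  have hR1 : (1 : ℝ) ≤ R := le_max_right _ _
  have hUR : ∀ t ∈ U, |t| ≤ R := by
    intro t ht
    have h := hr ht
    rw [Metric.mem_closedBall, Real.dist_eq, sub_zero] at h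
    exact h.trans (le_max_left _ _)
  have hαinv : (0 : ℝ) < 1 / α := by positivity
  set b0 : ℝ := hlo - 1 / α with hb0
  set b1 : ℝ := hhi - 1 / α with hb1
  set ε0 : ℝ := hlo / 2 with hε0def
  set ε1 : ℝ := (1 - hhi) / 2 with hε1def
  set B : ℝ := 1 / α + 1 with hBdef
  set M : ℝ := 2 * R + 2 with hMdef
  set K : ℝ := 3 * R + 2 with hKdef
  set γ : ℝ := b1 - 1 + ε1 with hγdef
  set CZ : ℝ := R * (2 ^ (1 - b1 + ε1) * (B / ε1 + 1)) with hCZdef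
  have hε1 : 0 < ε1 := by rw [hε1def]; linarith
  have hε0 : 0 < ε0 := by rw [hε0def]; linarith
  have hB1 : (1 : ℝ) ≤ B := by rw [hBdef]; linarith
  have hb01 : b0 ≤ b1 := by rw [hb0, hb1]; linarith
  have hb11 : b1 < 1 := by rw [hb1]; linarith
  have hK1 : (1 : ℝ) ≤ K := by rw [hKdef]; linarith
  have hM0 : (0 : ℝ) < M := by rw [hMdef]; linarith
  have hCZ0 : (0 : ℝ) ≤ CZ := by
    rw [hCZdef]
    have h1 : (0 : ℝ) ≤ B / ε1 := div_nonneg (by linarith) hε1.le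
    have h2 : (0 : ℝ) ≤ (2 : ℝ) ^ (1 - b1 + ε1) := Real.rpow_nonneg (by norm_num) _
    exact mul_nonneg (by linarith) (mul_nonneg h2 (by linarith))
  -- dominating profiles
  set Ψv : ℝ → ℝ≥0∞ := fun u =>
    if u ≤ K then (ENNReal.ofReal ((u ^ b0 + u ^ b1) * |Real.log u|)) ^ α else 0 with hΨv
  set Ψz : ℝ → ℝ≥0∞ := fun u =>
    if M < u then (ENNReal.ofReal (CZ * u ^ γ)) ^ α else 0 with hΨz
  have hΨvm : Measurable Ψv := by
    rw [hΨv]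
    refine Measurable.ite measurableSet_Iic ?_ measurable_const
    refine Measurable.pow ?_ measurable_const
    refine ENNReal.measurable_ofReal.comp ?_
    exact ((measurable_id.pow measurable_const).add
      (measurable_id.pow measurable_const)).mul Real.measurable_log.abs
  have hΨzm : Measurable Ψz := by
    rw [hΨz]
    refine Measurable.ite measurableSet_Ioi ?_ measurable_const
    refine Measurable.pow ?_ measurable_const
    exact ENNReal.measurable_ofReal.comp
      (measurable_const.mul (measurable_id.pow measurable_const))
  -- pointwise domination
  have hpt : ∀ t, |t| ≤ R → ∀ s : ℝ,
      (⨆ η ∈ Set.Icc hlo hhi, ENNReal.ofReal |phiKer α t s η|) ^ α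
        ≤ 2 ^ α * (Ψv |t - s| + Ψv |s|) + Ψz |s| := by
    intro t ht s
    rcases le_or_gt |s| M with hsM | hsM
    · -- near regime
      have hsup : (⨆ η ∈ Set.Icc hlo hhi, ENNReal.ofReal |phiKer α t s η|)
          ≤ ENNReal.ofReal ((|t - s| ^ b0 + |t - s| ^ b1) * |Real.log (|t - s|)|)
            + ENNReal.ofReal ((|s| ^ b0 + |s| ^ b1) * |Real.log (|s|)|) := by
        refine iSup₂_le fun η hη => ?_
        rw [← ENNReal.ofReal_add (by positivity) (by positivity)]
        refine ENNReal.ofReal_le_ofReal ?_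
        exact phiKer_le_W (by rw [hb0]; have := hη.1; linarith)
          (by rw [hb1]; have := hη.2; linarith)
      have hts : |t - s| ≤ K := by
        calc |t - s| ≤ |t| + |s| := abs_sub t s
          _ ≤ R + M := add_le_add ht hsM
          _ = K := by rw [hMdef, hKdef]; ring
      calc (⨆ η ∈ Set.Icc hlo hhi, ENNReal.ofReal |phiKer α t s η|) ^ α
          ≤ (ENNReal.ofReal ((|t - s| ^ b0 + |t - s| ^ b1) * |Real.log (|t - s|)|)
            + ENNReal.ofReal ((|s| ^ b0 + |s| ^ b1) * |Real.log (|s|)|)) ^ α :=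
            ENNReal.rpow_le_rpow hsup hα.le
        _ ≤ 2 ^ α * ((ENNReal.ofReal ((|t - s| ^ b0 + |t - s| ^ b1) * |Real.log (|t - s|)|)) ^ α
            + (ENNReal.ofReal ((|s| ^ b0 + |s| ^ b1) * |Real.log (|s|)|)) ^ α) :=
            ennreal_add_rpow_le hα.le
        _ = 2 ^ α * (Ψv |t - s| + Ψv |s|) := by
            simp only [hΨv]
            rw [if_pos hts, if_pos (hsM.trans (by rw [hMdef, hKdef]; linarith))]
        _ ≤ 2 ^ α * (Ψv |t - s| + Ψv |s|) + Ψz |s| := le_self_add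
    · -- far regime
      have hsup : (⨆ η ∈ Set.Icc hlo hhi, ENNReal.ofReal |phiKer α t s η|)
          ≤ ENNReal.ofReal (CZ * |s| ^ γ) := by
        refine iSup₂_le fun η hη => ENNReal.ofReal_le_ofReal ?_
        have hβb1 : η - 1 / α ≤ b1 := by rw [hb1]; have := hη.2; linarith
        have hβB : |η - 1 / α| ≤ B := by
          rw [abs_le, hBdef]
          have h1 := hη.1
          have h2 := hη.2
          constructor <;> [linarith [hm]; linarith [hp]]
        rcases le_or_gt s 0 with hsneg | hspos
        · have hsM' : 2 * R + 2 < -s := by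
            rw [abs_of_nonpos hsneg] at hsM
            rw [hMdef] at hsM
            linarith
          have hphi : phiKer α t s η = phiKer α (-t) (-s) η := by
            unfold phiKer
            rw [show -t - -s = -(t - s) by ring, abs_neg, abs_neg]
          rw [hphi]
          have hfar := far_bound (β := η - 1 / α) (b1 := b1) (B := B) (ε := ε1) (R := R)
            (t := -t) (s := -s) hβb1 hb11 hβB hB1 hε1 hR1 (by rwa [abs_neg]) hsM'
          have heq : R * (2 ^ (1 - b1 + ε1) * (B / ε1 + 1)) * (-s) ^ (b1 - 1 + ε1)
              = CZ * |s| ^ γ := by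
            rw [hCZdef, hγdef, abs_of_nonpos hsneg]
          exact le_of_le_of_eq hfar heq
        · have hsM' : 2 * R + 2 < s := by
            rw [abs_of_pos hspos] at hsM
            rw [hMdef] at hsM
            linarith
          have hfar := far_bound (β := η - 1 / α) (b1 := b1) (B := B) (ε := ε1) (R := R)
            (t := t) (s := s) hβb1 hb11 hβB hB1 hε1 hR1 ht hsM'
          have heq : R * (2 ^ (1 - b1 + ε1) * (B / ε1 + 1)) * s ^ (b1 - 1 + ε1)
              = CZ * |s| ^ γ := by
            rw [hCZdef, hγdef, abs_of_pos hspos]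
          exact le_of_le_of_eq hfar heq
      calc (⨆ η ∈ Set.Icc hlo hhi, ENNReal.ofReal |phiKer α t s η|) ^ α
          ≤ (ENNReal.ofReal (CZ * |s| ^ γ)) ^ α := ENNReal.rpow_le_rpow hsup hα.le
        _ = Ψz |s| := by simp only [hΨz]; rw [if_pos hsM]
        _ ≤ 2 ^ α * (Ψv |t - s| + Ψv |s|) + Ψz |s| := le_add_self
  -- finiteness of the Ψv-integral
  have hIV : (∫⁻ u : ℝ, Ψv |u|) < ⊤ := by
    rw [lintegral_comp_abs Ψv hΨvm]
    have hq0 : (-1 : ℝ) < (b0 - ε0) * α := by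
      have h1 : (b0 - ε0) * α = α * hlo / 2 - 1 := by
        rw [hb0, hε0def]
        field_simp
        ring
      rw [h1]
      nlinarith [mul_pos hα hm]
    set c1 : ℝ≥0∞ := ENNReal.ofReal ((2 / ε0) ^ α) with hc1
    set c2 : ℝ≥0∞ := ENNReal.ofReal ((2 * K ^ 2) ^ α) with hc2
    have hbnd : ∀ u ∈ Set.Ioi (0 : ℝ), Ψv u
        ≤ Set.indicator (Set.Ioc (0 : ℝ) K)
            (fun u => 2 ^ α * (c1 * ENNReal.ofReal (u ^ ((b0 - ε0) * α)) + c2)) u := by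
      intro u hu
      have hu0 : (0 : ℝ) < u := hu
      simp only [hΨv]
      split_ifs with hK'
      · have huK : u ∈ Set.Ioc (0 : ℝ) K := ⟨hu0, hK'⟩
        rw [Set.indicator_of_mem huK]
        have hW : (u ^ b0 + u ^ b1) * |Real.log u| ≤ (2 / ε0) * u ^ (b0 - ε0) + 2 * K ^ 2 := by
          have hkk : (0 : ℝ) ≤ 2 * K ^ 2 := by positivity
          have hterm : (0 : ℝ) ≤ (2 / ε0) * u ^ (b0 - ε0) :=
            mul_nonneg (div_nonneg (by norm_num) hε0.le) (Real.rpow_nonneg hu0.le _)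
          rcases le_total u 1 with h1 | h1
          · have e1 : u ^ b1 ≤ u ^ b0 := Real.rpow_le_rpow_of_exponent_ge hu0 h1 hb01
            have e2 : |Real.log u| ≤ u ^ (-ε0) / ε0 := by
              rw [abs_of_nonpos (Real.log_nonpos hu0.le h1), ← Real.log_inv]
              refine (Real.log_le_rpow_div (by positivity) hε0).trans ?_
              rw [Real.inv_rpow hu0.le, ← Real.rpow_neg hu0.le]
            have hb0n : (0 : ℝ) ≤ u ^ b0 := Real.rpow_nonneg hu0.le _
            calc (u ^ b0 + u ^ b1) * |Real.log u|
                ≤ (2 * u ^ b0) * (u ^ (-ε0) / ε0) := by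
                  refine mul_le_mul (by linarith) e2 (abs_nonneg _) (by positivity)
              _ = (2 / ε0) * (u ^ b0 * u ^ (-ε0)) := by ring
              _ = (2 / ε0) * u ^ (b0 - ε0) := by
                  rw [show b0 - ε0 = b0 + -ε0 from by ring, ← Real.rpow_add hu0]
              _ ≤ (2 / ε0) * u ^ (b0 - ε0) + 2 * K ^ 2 := le_add_of_nonneg_right hkk
          · have e1 : u ^ b0 ≤ u ^ b1 := Real.rpow_le_rpow_of_exponent_le h1 hb01
            have e2 : u ^ b1 ≤ K := by
              have h3 : u ^ b1 ≤ u ^ (1 : ℝ) :=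
                Real.rpow_le_rpow_of_exponent_le h1 (by rw [hb1]; linarith)
              rw [Real.rpow_one] at h3
              exact h3.trans hK'
            have e3 : |Real.log u| ≤ K := by
              rw [abs_of_nonneg (Real.log_nonneg h1)]
              have h4 := Real.log_le_sub_one_of_pos hu0
              linarith
            calc (u ^ b0 + u ^ b1) * |Real.log u| ≤ (2 * K) * K := by
                  refine mul_le_mul (by linarith) e3 (abs_nonneg _) (by positivity)
              _ = 2 * K ^ 2 := by ring
              _ ≤ (2 / ε0) * u ^ (b0 - ε0) + 2 * K ^ 2 := le_add_of_nonneg_left hterm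
        calc (ENNReal.ofReal ((u ^ b0 + u ^ b1) * |Real.log u|)) ^ α
            ≤ (ENNReal.ofReal ((2 / ε0) * u ^ (b0 - ε0) + 2 * K ^ 2)) ^ α :=
              ENNReal.rpow_le_rpow (ENNReal.ofReal_le_ofReal hW) hα.le
          _ = (ENNReal.ofReal ((2 / ε0) * u ^ (b0 - ε0)) + ENNReal.ofReal (2 * K ^ 2)) ^ α := by
              rw [ENNReal.ofReal_add
                (mul_nonneg (div_nonneg (by norm_num) hε0.le) (Real.rpow_nonneg hu0.le _))
                (by positivity)]
          _ ≤ 2 ^ α * ((ENNReal.ofReal ((2 / ε0) * u ^ (b0 - ε0))) ^ α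
              + (ENNReal.ofReal (2 * K ^ 2)) ^ α) := ennreal_add_rpow_le hα.le
          _ = 2 ^ α * (c1 * ENNReal.ofReal (u ^ ((b0 - ε0) * α)) + c2) := by
              rw [hc1, hc2]
              congr 2
              · rw [ofReal_mul_rpow (div_nonneg (by norm_num) hε0.le)
                  (Real.rpow_nonneg hu0.le _) hα.le, ← Real.rpow_mul hu0.le]
              · rw [ENNReal.ofReal_rpow_of_nonneg (by positivity) hα.le]
      · exact zero_le
    have hstep : (∫⁻ u in Set.Ioi (0 : ℝ), Ψv u)
        ≤ ∫⁻ u in Set.Ioc (0 : ℝ) K, 2 ^ α * (c1 * ENNReal.ofReal (u ^ ((b0 - ε0) * α)) + c2) := by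
      calc (∫⁻ u in Set.Ioi (0 : ℝ), Ψv u)
          ≤ ∫⁻ u in Set.Ioi (0 : ℝ), Set.indicator (Set.Ioc (0 : ℝ) K)
              (fun u => 2 ^ α * (c1 * ENNReal.ofReal (u ^ ((b0 - ε0) * α)) + c2)) u := by
            refine lintegral_mono_ae ?_
            filter_upwards [ae_restrict_mem measurableSet_Ioi] with u hu using hbnd u hu
        _ ≤ ∫⁻ u, Set.indicator (Set.Ioc (0 : ℝ) K)
              (fun u => 2 ^ α * (c1 * ENNReal.ofReal (u ^ ((b0 - ε0) * α)) + c2)) u :=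
            lintegral_mono' Measure.restrict_le_self le_rfl
        _ = _ := lintegral_indicator measurableSet_Ioc _
    have h2top : (2 : ℝ≥0∞) ^ α ≠ ⊤ := by
      exact (ENNReal.rpow_lt_top_of_nonneg hα.le (by norm_num)).ne
    have hrint : (∫⁻ u in Set.Ioc (0 : ℝ) K, ENNReal.ofReal (u ^ ((b0 - ε0) * α))) < ⊤ := by
      have hint : IntegrableOn (fun u : ℝ => u ^ ((b0 - ε0) * α)) (Set.Ioc (0 : ℝ) K) volume :=
        (intervalIntegral.intervalIntegrable_rpow' (a := 0) (b := K) hq0).1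
      exact hint.lintegral_lt_top
    calc (2 : ℝ≥0∞) * ∫⁻ u in Set.Ioi (0 : ℝ), Ψv u
        ≤ 2 * ∫⁻ u in Set.Ioc (0 : ℝ) K,
            2 ^ α * (c1 * ENNReal.ofReal (u ^ ((b0 - ε0) * α)) + c2) :=
          mul_le_mul_right hstep 2
      _ = 2 * (2 ^ α * ((c1 * ∫⁻ u in Set.Ioc (0 : ℝ) K, ENNReal.ofReal (u ^ ((b0 - ε0) * α)))
            + c2 * volume (Set.Ioc (0 : ℝ) K))) := by
          rw [lintegral_const_mul' _ _ h2top]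
          congr 1
          rw [lintegral_add_right _ measurable_const,
            lintegral_const_mul' _ _ ENNReal.ofReal_ne_top, setLIntegral_const]
      _ < ⊤ := by
          refine ENNReal.mul_lt_top (by norm_num) ?_
          refine ENNReal.mul_lt_top (h2top.lt_top) ?_
          refine ENNReal.add_lt_top.mpr ⟨?_, ?_⟩
          · exact ENNReal.mul_lt_top ENNReal.ofReal_lt_top hrint
          · exact ENNReal.mul_lt_top ENNReal.ofReal_lt_top measure_Ioc_lt_top
  -- finiteness of the Ψz-integral
  have hIZ : (∫⁻ u : ℝ, Ψz |u|) < ⊤ := by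
    rw [lintegral_comp_abs Ψz hΨzm]
    have hq1 : γ * α < -1 := by
      have h1 : γ * α = α * hhi - 1 - α + α * (1 - hhi) / 2 := by
        rw [hγdef, hb1, hε1def]
        field_simp
      rw [h1]
      nlinarith [mul_pos hα (by linarith : (0 : ℝ) < 1 - hhi)]
    have hbnd : ∀ u : ℝ, Ψz u = Set.indicator (Set.Ioi M)
        (fun u => ENNReal.ofReal (CZ ^ α) * ENNReal.ofReal (u ^ (γ * α))) u := by
      intro u
      simp only [hΨz]
      split_ifs with h
      · rw [Set.indicator_of_mem (Set.mem_Ioi.mpr h),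
          ofReal_mul_rpow hCZ0 (Real.rpow_nonneg (by linarith [hM0] : (0:ℝ) ≤ u) _) hα.le,
          ← Real.rpow_mul (by linarith [hM0] : (0:ℝ) ≤ u)]
      · rw [Set.indicator_of_notMem (by simpa [Set.mem_Ioi] using h)]
    have hrint : (∫⁻ u in Set.Ioi M, ENNReal.ofReal (u ^ (γ * α))) < ⊤ := by
      have hint : IntegrableOn (fun u : ℝ => u ^ (γ * α)) (Set.Ioi M) volume :=
        integrableOn_Ioi_rpow_of_lt hq1 hM0
      exact hint.lintegral_lt_top
    calc (2 : ℝ≥0∞) * ∫⁻ u in Set.Ioi (0 : ℝ), Ψz u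
        ≤ 2 * ∫⁻ u, Ψz u := mul_le_mul_right (lintegral_mono' Measure.restrict_le_self le_rfl) 2
      _ = 2 * (ENNReal.ofReal (CZ ^ α) * ∫⁻ u in Set.Ioi M, ENNReal.ofReal (u ^ (γ * α))) := by
          congr 1
          rw [lintegral_congr hbnd, lintegral_indicator measurableSet_Ioi,
            lintegral_const_mul' _ _ ENNReal.ofReal_ne_top]
      _ < ⊤ := by
          refine ENNReal.mul_lt_top (by norm_num) ?_
          exact ENNReal.mul_lt_top ENNReal.ofReal_lt_top hrint
  -- assemble
  have h2top : (2 : ℝ≥0∞) ^ α ≠ ⊤ :=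
    (ENNReal.rpow_lt_top_of_nonneg hα.le (by norm_num)).ne
  have hVabs : Measurable fun u : ℝ => Ψv |u| := hΨvm.comp measurable_abs
  have hZabs : Measurable fun u : ℝ => Ψz |u| := hΨzm.comp measurable_abs
  have hC : (2 : ℝ≥0∞) ^ α * ((∫⁻ u : ℝ, Ψv |u|) + ∫⁻ u : ℝ, Ψv |u|) + (∫⁻ u : ℝ, Ψz |u|) < ⊤ := by
    refine ENNReal.add_lt_top.mpr ⟨?_, hIZ⟩
    exact ENNReal.mul_lt_top h2top.lt_top (ENNReal.add_lt_top.mpr ⟨hIV, hIV⟩)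
  refine lt_of_le_of_lt (iSup₂_le fun t ht => ?_) hC
  have htR := hUR t ht
  calc ∫⁻ s : ℝ, (⨆ η ∈ Set.Icc hlo hhi, ENNReal.ofReal |phiKer α t s η|) ^ α
      ≤ ∫⁻ s : ℝ, (2 ^ α * (Ψv |t - s| + Ψv |s|) + Ψz |s|) :=
        lintegral_mono (hpt t htR)
    _ = 2 ^ α * ((∫⁻ s : ℝ, Ψv |t - s|) + ∫⁻ s : ℝ, Ψv |s|) + ∫⁻ s : ℝ, Ψz |s| := by
        have hm1 : Measurable fun s : ℝ => Ψv |t - s| :=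
          hΨvm.comp (measurable_const.sub measurable_id).abs
        have hm2 : Measurable fun s : ℝ => 2 ^ α * (Ψv |t - s| + Ψv |s|) :=
          (hm1.add hVabs).const_mul _
        rw [lintegral_add_left hm2, lintegral_const_mul' _ _ h2top, lintegral_add_left hm1]
    _ = 2 ^ α * ((∫⁻ u : ℝ, Ψv |u|) + ∫⁻ u : ℝ, Ψv |u|) + ∫⁻ u : ℝ, Ψz |u| := by
        have hshift : (∫⁻ s : ℝ, Ψv |t - s|) = ∫⁻ u : ℝ, Ψv |u| :=
          (Measure.measurePreserving_sub_left (volume : Measure ℝ) t).lintegral_comp hVabs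
        rw [hshift]
end

section
/- Let β ∈ (−1/2, 0) and M₁ > 0. Let (Ω, P) be a probability space and let X, Y : Ω → ℝ be random variables whose laws are the Gaussian measures N(0, σ₁²) and N(0, σ₂²), respectively, with σ₁ ≥ M₁ and σ₂ ≥ M₁. Then |X|^β, |Y|^β and |X|^β |Y|^β are integrable, and |E[|X|^β |Y|^β] − E[|X|^β] E[|Y|^β]| ≤ 2 · M₁^{2β} · 2^{β} Γ(β + 1/2) / √π. -/
open MeasureTheory ProbabilityTheory Real

lemma aux_integrable_comp_abs {f : ℝ → ℝ}
    (hf : IntegrableOn (fun x => f |x|) (Set.Ioi 0)) :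
    Integrable (fun x => f |x|) := by
  have int_Iic : IntegrableOn (fun x ↦ f |x|) (Set.Iic 0) := by
    rw [← Measure.map_neg_eq_self (volume : Measure ℝ)]
    let m : MeasurableEmbedding fun x : ℝ => -x := (Homeomorph.neg ℝ).measurableEmbedding
    rw [m.integrableOn_map_iff]
    simp_rw [Function.comp_def, abs_neg, Set.neg_preimage, Set.neg_Iic, neg_zero]
    exact (integrableOn_Ici_iff_integrableOn_Ioi enorm_ne_top).mpr hf
  have h := int_Iic.union hf
  rwa [Set.Iic_union_Ioi, integrableOn_univ] at h

lemma aux_gauss_moment (σ : ℝ) (hσ : 0 < σ) {s : ℝ} (hs : -1 < s) :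
    Integrable (fun x : ℝ => |x| ^ s) (gaussianReal 0 (σ ^ 2).toNNReal) ∧
    ∫ x, |x| ^ s ∂(gaussianReal 0 (σ ^ 2).toNNReal)
      = σ ^ s * (2 ^ (s / 2) * Real.Gamma ((s + 1) / 2) / Real.sqrt π) := by
  set v : NNReal := (σ ^ 2).toNNReal with hv_def
  have hv : v ≠ 0 := by
    simp only [hv_def, ne_eq, Real.toNNReal_eq_zero, not_le]
    positivity
  have hvr : (v : ℝ) = σ ^ 2 := Real.coe_toNNReal _ (by positivity)
  set d : ℝ → NNReal := fun x => (gaussianPDFReal 0 v x).toNNReal with hd_def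
  have hd_meas : Measurable d := (measurable_gaussianPDFReal 0 v).real_toNNReal
  have hmeq : gaussianReal 0 v = volume.withDensity (fun x => (d x : ENNReal)) := by
    rw [gaussianReal_of_var_ne_zero _ hv]
    congr 1
  set b : ℝ := (2 * σ ^ 2)⁻¹ with hb_def
  have hb : 0 < b := by positivity
  set c₀ : ℝ := (Real.sqrt (2 * π * σ ^ 2))⁻¹ with hc0_def
  set F : ℝ → ℝ := fun t => c₀ * (t ^ s * rexp (-b * t ^ 2)) with hF_def
  have key : ∀ x : ℝ, (d x : ℝ) * |x| ^ s = F |x| := by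
    intro x
    have hdx : (d x : ℝ) = gaussianPDFReal 0 v x :=
      Real.coe_toNNReal _ (gaussianPDFReal_nonneg 0 v x)
    rw [hdx, gaussianPDFReal, hvr, hF_def, hc0_def, hb_def]
    simp only [sub_zero]
    rw [sq_abs]
    ring_nf
  have hIoi : IntegrableOn (fun x : ℝ => F |x|) (Set.Ioi 0) := by
    have h1 : IntegrableOn F (Set.Ioi 0) :=
      ((integrableOn_rpow_mul_exp_neg_mul_sq hb hs).const_mul c₀)
    exact h1.congr_fun (fun x hx => by rw [abs_of_pos hx]) measurableSet_Ioi
  have hInt : Integrable (fun x : ℝ => F |x|) := aux_integrable_comp_abs hIoi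
  have hint_transfer : Integrable (fun x : ℝ => |x| ^ s) (gaussianReal 0 v) := by
    rw [hmeq, integrable_withDensity_iff_integrable_smul hd_meas]
    refine hInt.congr (Filter.Eventually.of_forall fun x => ?_)
    simp only [NNReal.smul_def, smul_eq_mul]
    exact (key x).symm
  refine ⟨hint_transfer, ?_⟩
  rw [hmeq, integral_withDensity_eq_integral_smul hd_meas]
  have hie : (∫ x : ℝ, d x • |x| ^ s) = ∫ x : ℝ, F |x| := by
    refine integral_congr_ae (Filter.Eventually.of_forall fun x => ?_)
    simp only [NNReal.smul_def, smul_eq_mul]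
    exact key x
  rw [hie]
  rw [integral_comp_abs (f := F), hF_def]
  rw [MeasureTheory.integral_const_mul]
  have hIoi_eq : ∫ x in Set.Ioi (0:ℝ), x ^ s * rexp (-b * x ^ 2)
      = b ^ (-(s + 1) / 2) * (1 / 2) * Real.Gamma ((s + 1) / 2) := by
    have h2 := integral_rpow_mul_exp_neg_mul_rpow (p := 2) (q := s) (b := b) two_pos hs hb
    rw [← h2]
    refine setIntegral_congr_fun measurableSet_Ioi (fun x hx => ?_)
    congr 1
    rw [← Real.rpow_natCast x 2]
    norm_num
  rw [hIoi_eq]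
  -- algebra
  have hπ : (0:ℝ) < π := Real.pi_pos
  have h1 : Real.sqrt (2 * π * σ ^ 2) = Real.sqrt 2 * Real.sqrt π * σ := by
    rw [Real.sqrt_mul (by positivity), Real.sqrt_mul (by norm_num), Real.sqrt_sq hσ.le]
  have h2 : b ^ (-(s + 1) / 2) = 2 ^ (s / 2) * Real.sqrt 2 * (σ ^ s * σ) := by
    rw [hb_def, show (-(s+1)/2 : ℝ) = -((s+1)/2) by ring,
      Real.rpow_neg (by positivity), ← Real.inv_rpow (by positivity), inv_inv,
      Real.mul_rpow (by norm_num) (by positivity),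
      show ((σ:ℝ) ^ 2) = σ ^ (2:ℝ) by rw [← Real.rpow_natCast σ 2]; norm_num,
      ← Real.rpow_mul hσ.le,
      show ((2:ℝ) * ((s+1)/2)) = s + 1 by ring,
      show ((s+1)/2 : ℝ) = s/2 + 1/2 by ring,
      Real.rpow_add two_pos, Real.rpow_add hσ, Real.rpow_one,
      show ((2:ℝ) ^ (1/2 : ℝ)) = Real.sqrt 2 by rw [Real.sqrt_eq_rpow]]
  rw [hc0_def, h1, h2]
  have hs2 : Real.sqrt 2 ≠ 0 := by positivity
  have hsπ : Real.sqrt π ≠ 0 := by positivity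
  have hσ' : σ ≠ 0 := ne_of_gt hσ
  field_simp

theorem gaussian_covariance_bound_negative_powers
    (β : ℝ) (hβ : β ∈ Set.Ioo (-(1 : ℝ) / 2) 0) (M₁ : ℝ) (hM₁ : 0 < M₁)
    (σ₁ σ₂ : ℝ) (hσ₁ : M₁ ≤ σ₁) (hσ₂ : M₁ ≤ σ₂)
    (Ω : Type) [MeasurableSpace Ω] (P : Measure Ω) [IsProbabilityMeasure P]
    (X Y : Ω → ℝ) (hX : Measurable X) (hY : Measurable Y)
    (hlawX : P.map X = gaussianReal 0 (σ₁ ^ 2).toNNReal)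
    (hlawY : P.map Y = gaussianReal 0 (σ₂ ^ 2).toNNReal) :
    Integrable (fun ω => |X ω| ^ β) P ∧
      Integrable (fun ω => |Y ω| ^ β) P ∧
      Integrable (fun ω => |X ω| ^ β * |Y ω| ^ β) P ∧
      |(∫ ω, |X ω| ^ β * |Y ω| ^ β ∂P)
          - (∫ ω, |X ω| ^ β ∂P) * (∫ ω, |Y ω| ^ β ∂P)|
        ≤ 2 * M₁ ^ (2 * β) * (2 ^ β * Real.Gamma (β + 1 / 2) / Real.sqrt π) := by
  obtain ⟨hβl, hβu⟩ := hβ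
  have hσ₁0 : 0 < σ₁ := lt_of_lt_of_le hM₁ hσ₁
  have hσ₂0 : 0 < σ₂ := lt_of_lt_of_le hM₁ hσ₂
  have hsβ : (-1 : ℝ) < β := by linarith
  have hs2β : (-1 : ℝ) < 2 * β := by linarith
  set c : ℝ := 2 ^ β * Real.Gamma (β + 1 / 2) / Real.sqrt π with hc_def
  have hc_pos : 0 < c := by
    refine div_pos (mul_pos (rpow_pos_of_pos two_pos β) (Real.Gamma_pos_of_pos (by linarith)))
      (Real.sqrt_pos.mpr Real.pi_pos)
  -- measurability of x ↦ |x| ^ s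
  have hgm : ∀ s : ℝ, Measurable (fun x : ℝ => |x| ^ s) := by
    intro s; fun_prop
  -- moments rewritten
  have e1 : (2 * β) / 2 = β := by ring
  have e2 : (2 * β + 1) / 2 = β + 1 / 2 := by ring
  have hmX2 := aux_gauss_moment σ₁ hσ₁0 hs2β
  have hmY2 := aux_gauss_moment σ₂ hσ₂0 hs2β
  rw [e1, e2] at hmX2 hmY2
  have hmX1 := aux_gauss_moment σ₁ hσ₁0 hsβ
  have hmY1 := aux_gauss_moment σ₂ hσ₂0 hsβ
  -- transfer integrability and integrals to P
  have hIX : Integrable (fun ω => |X ω| ^ β) P := by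
    have := (integrable_map_measure ((hgm β).aestronglyMeasurable) hX.aemeasurable).mp
      (hlawX ▸ hmX1.1)
    exact this
  have hIY : Integrable (fun ω => |Y ω| ^ β) P := by
    have := (integrable_map_measure ((hgm β).aestronglyMeasurable) hY.aemeasurable).mp
      (hlawY ▸ hmY1.1)
    exact this
  have hIX2 : Integrable (fun ω => |X ω| ^ (2 * β)) P := by
    have := (integrable_map_measure ((hgm (2 * β)).aestronglyMeasurable) hX.aemeasurable).mp
      (hlawX ▸ hmX2.1)
    exact this
  have hIY2 : Integrable (fun ω => |Y ω| ^ (2 * β)) P := by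
    have := (integrable_map_measure ((hgm (2 * β)).aestronglyMeasurable) hY.aemeasurable).mp
      (hlawY ▸ hmY2.1)
    exact this
  have hEX2 : ∫ ω, |X ω| ^ (2 * β) ∂P = σ₁ ^ (2 * β) * c := by
    rw [← hmX2.2, ← hlawX, integral_map hX.aemeasurable ((hgm (2 * β)).aestronglyMeasurable)]
  have hEY2 : ∫ ω, |Y ω| ^ (2 * β) ∂P = σ₂ ^ (2 * β) * c := by
    rw [← hmY2.2, ← hlawY, integral_map hY.aemeasurable ((hgm (2 * β)).aestronglyMeasurable)]
  -- MemLp 2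
  have hsq : ∀ (a : ℝ), (|a| ^ β) ^ (2 : ℝ) = |a| ^ (2 * β) := by
    intro a
    rw [← Real.rpow_mul (abs_nonneg a)]
    ring_nf
  have hsqn : ∀ (a : ℝ), (|a| ^ β) ^ (2 : ℕ) = |a| ^ (2 * β) := by
    intro a
    rw [← Real.rpow_natCast (|a| ^ β) 2]
    exact_mod_cast hsq a
  have hmem2X : MemLp (fun ω => |X ω| ^ β) 2 P := by
    refine (memLp_two_iff_integrable_sq ((hgm β).comp hX).aestronglyMeasurable).mpr ?_
    refine hIX2.congr (Filter.Eventually.of_forall fun ω => ?_)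
    exact (hsqn (X ω)).symm
  have hmem2Y : MemLp (fun ω => |Y ω| ^ β) 2 P := by
    refine (memLp_two_iff_integrable_sq ((hgm β).comp hY).aestronglyMeasurable).mpr ?_
    refine hIY2.congr (Filter.Eventually.of_forall fun ω => ?_)
    exact (hsqn (Y ω)).symm
  -- product integrable
  have hIprod : Integrable (fun ω => |X ω| ^ β * |Y ω| ^ β) P := by
    have h := hmem2X.smul (r := 1) hmem2Y (hpqr := ENNReal.holderConjugate_iff.mpr ENNReal.inv_two_add_inv_two)
    rw [memLp_one_iff_integrable] at h
    refine h.congr (Filter.Eventually.of_forall fun ω => ?_)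
    simp [smul_eq_mul, mul_comm]
  refine ⟨hIX, hIY, hIprod, ?_⟩
  -- Hölder bounds
  have hconj : Real.HolderConjugate 2 2 := ⟨by norm_num, by norm_num, by norm_num⟩
  have hof : ENNReal.ofReal (2 : ℝ) = 2 := by norm_num
  have h2X : MemLp (fun ω => |X ω| ^ β) (ENNReal.ofReal 2) P := hof ▸ hmem2X
  have h2Y : MemLp (fun ω => |Y ω| ^ β) (ENNReal.ofReal 2) P := hof ▸ hmem2Y
  have hnnX : 0 ≤ᵐ[P] fun ω => |X ω| ^ β :=
    Filter.Eventually.of_forall fun ω => rpow_nonneg (abs_nonneg _) _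
  have hnnY : 0 ≤ᵐ[P] fun ω => |Y ω| ^ β :=
    Filter.Eventually.of_forall fun ω => rpow_nonneg (abs_nonneg _) _
  have hone : MemLp (fun _ : Ω => (1 : ℝ)) (ENNReal.ofReal 2) P := memLp_const 1
  have hnn1 : 0 ≤ᵐ[P] fun _ : Ω => (1 : ℝ) := Filter.Eventually.of_forall fun _ => zero_le_one
  have hint1 : ∫ _ : Ω, ((1 : ℝ) ^ (2 : ℝ)) ∂P = 1 := by simp
  set K : ℝ := M₁ ^ (2 * β) * c with hK_def
  have hK_pos : 0 < K := mul_pos (rpow_pos_of_pos hM₁ _) hc_pos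
  have hmonoX : σ₁ ^ (2 * β) * c ≤ K :=
    mul_le_mul_of_nonneg_right (rpow_le_rpow_of_nonpos hM₁ hσ₁ (by linarith)) hc_pos.le
  have hmonoY : σ₂ ^ (2 * β) * c ≤ K :=
    mul_le_mul_of_nonneg_right (rpow_le_rpow_of_nonpos hM₁ hσ₂ (by linarith)) hc_pos.le
  have hEX2' : ∫ ω, (|X ω| ^ β) ^ (2 : ℝ) ∂P = σ₁ ^ (2 * β) * c := by
    rw [← hEX2]
    exact integral_congr_ae (Filter.Eventually.of_forall fun ω => hsq (X ω))
  have hEY2' : ∫ ω, (|Y ω| ^ β) ^ (2 : ℝ) ∂P = σ₂ ^ (2 * β) * c := by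
    rw [← hEY2]
    exact integral_congr_ae (Filter.Eventually.of_forall fun ω => hsq (Y ω))
  have hhalf : K ^ (1 / 2 : ℝ) * K ^ (1 / 2 : ℝ) = K := by
    rw [← Real.rpow_add hK_pos]
    norm_num
  have hrt : ∀ {t : ℝ}, 0 ≤ t → t ≤ K → t ^ (1 / 2 : ℝ) ≤ K ^ (1 / 2 : ℝ) := fun ht0 ht =>
    Real.rpow_le_rpow ht0 ht (by norm_num)
  -- bound A
  have hA_le : (∫ ω, |X ω| ^ β * |Y ω| ^ β ∂P) ≤ K := by
    have h := integral_mul_le_Lp_mul_Lq_of_nonneg hconj hnnX hnnY h2X h2Y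
    rw [hEX2', hEY2'] at h
    refine h.trans ?_
    calc (σ₁ ^ (2*β) * c) ^ (1/2 : ℝ) * (σ₂ ^ (2*β) * c) ^ (1/2 : ℝ)
        ≤ K ^ (1/2 : ℝ) * K ^ (1/2 : ℝ) :=
          mul_le_mul (hrt (by positivity) hmonoX) (hrt (by positivity) hmonoY) (by positivity) (by positivity)
      _ = K := hhalf
  -- bound B factors
  have hBX : (∫ ω, |X ω| ^ β ∂P) ≤ K ^ (1 / 2 : ℝ) := by
    have h := integral_mul_le_Lp_mul_Lq_of_nonneg hconj hnnX hnn1 h2X hone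
    rw [hEX2', hint1] at h
    simp only [mul_one] at h
    refine h.trans ?_
    rw [Real.one_rpow, mul_one]
    exact hrt (by positivity) hmonoX
  have hBY : (∫ ω, |Y ω| ^ β ∂P) ≤ K ^ (1 / 2 : ℝ) := by
    have h := integral_mul_le_Lp_mul_Lq_of_nonneg hconj hnnY hnn1 h2Y hone
    rw [hEY2', hint1] at h
    simp only [mul_one] at h
    refine h.trans ?_
    rw [Real.one_rpow, mul_one]
    exact hrt (by positivity) hmonoY
  have hAX0 : 0 ≤ ∫ ω, |X ω| ^ β ∂P := integral_nonneg fun ω => rpow_nonneg (abs_nonneg _) _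
  have hAY0 : 0 ≤ ∫ ω, |Y ω| ^ β ∂P := integral_nonneg fun ω => rpow_nonneg (abs_nonneg _) _
  have hA0 : 0 ≤ ∫ ω, |X ω| ^ β * |Y ω| ^ β ∂P :=
    integral_nonneg fun ω => mul_nonneg (rpow_nonneg (abs_nonneg _) _)
      (rpow_nonneg (abs_nonneg _) _)
  have hB_le : (∫ ω, |X ω| ^ β ∂P) * (∫ ω, |Y ω| ^ β ∂P) ≤ K := by
    calc (∫ ω, |X ω| ^ β ∂P) * (∫ ω, |Y ω| ^ β ∂P)
        ≤ K ^ (1/2 : ℝ) * K ^ (1/2 : ℝ) := mul_le_mul hBX hBY hAY0 (by positivity)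
      _ = K := hhalf
  have hB0 : 0 ≤ (∫ ω, |X ω| ^ β ∂P) * (∫ ω, |Y ω| ^ β ∂P) := mul_nonneg hAX0 hAY0
  have h2K : 2 * M₁ ^ (2 * β) * c = 2 * K := by rw [hK_def]; ring
  rw [h2K, abs_sub_le_iff]
  constructor <;> linarith
end

section
/- Let K ≥ 1 and L ≥ 1 be integers and let a = (a_0, …, a_K) be real numbers with L vanishing moments: ∑_{k=0}^{K} k^q a_k = 0 for all q ∈ {0, …, L} (with 0^0 = 1) and ∑_{k=0}^{K} k^{L+1} a_k ≠ 0. Let 0 < α ≤ 2 and H₀ ∈ (0,1). Then there exist a constant C > 0 and an integer K₀ ≥ 1 such that for every m ∈ ℤ with |m| ≥ K₀: ∫_ℝ | ∑_{p=0}^{K} a_p |p − s|^{H₀ − 1/α} |^{α/2} · | ∑_{p'=0}^{K} a_{p'} |p' − s − m|^{H₀ − 1/α} |^{α/2} ds ≤ C · |m|^{α(H₀ − (L+1))/2}. -/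
open MeasureTheory Set
open scoped ENNReal

lemma aux_rpow_add_le (x y : ℝ) (hx : 0 ≤ x) (hy : 0 ≤ y) {p : ℝ} (hp : 0 < p) (hp1 : p ≤ 1) :
    (x + y) ^ p ≤ x ^ p + y ^ p := by
  have h := NNReal.rpow_add_le_add_rpow x.toNNReal y.toNNReal hp.le hp1
  have := NNReal.coe_le_coe.2 h
  push_cast at this
  rwa [Real.coe_toNNReal _ hx, Real.coe_toNNReal _ hy] at this

lemma aux_rpow_sum_le {ι : Type*} (s : Finset ι) (x : ι → ℝ) (hx : ∀ i ∈ s, 0 ≤ x i)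
    {p : ℝ} (hp : 0 < p) (hp1 : p ≤ 1) :
    (∑ i ∈ s, x i) ^ p ≤ ∑ i ∈ s, x i ^ p := by
  classical
  induction s using Finset.cons_induction with
  | empty => simp [Real.zero_rpow hp.ne']
  | cons a t hat ih =>
    rw [Finset.sum_cons, Finset.sum_cons]
    have h1 : 0 ≤ x a := hx a (Finset.mem_cons_self a t)
    have h2 : ∀ i ∈ t, 0 ≤ x i := fun i hi => hx i (Finset.mem_cons_of_mem hi)
    have h3 : 0 ≤ ∑ i ∈ t, x i := Finset.sum_nonneg h2
    calc (x a + ∑ i ∈ t, x i) ^ p ≤ x a ^ p + (∑ i ∈ t, x i) ^ p :=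
          aux_rpow_add_le _ _ h1 h3 hp hp1
      _ ≤ x a ^ p + ∑ i ∈ t, x i ^ p := by gcongr; exact ih h2

lemma aux_taylor {n : ℕ} {ψ : ℝ → ℝ}
    (hψ : ContDiffOn ℝ (n + 1) ψ (Icc (0:ℝ) (1/2))) :
    ∃ C > 0, ∃ c : ℕ → ℝ, ∀ x ∈ Icc (0:ℝ) (1/2),
      |ψ x - ∑ q ∈ Finset.range (n+1), c q * x ^ q| ≤ C * x ^ (n+1) := by
  have hu : UniqueDiffOn ℝ (Icc (0:ℝ) (1/2)) := uniqueDiffOn_Icc (by norm_num)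
  obtain ⟨M, hM⟩ := (isCompact_Icc (a := (0:ℝ)) (b := 1/2)).exists_bound_of_continuousOn
      (hψ.continuousOn_iteratedDerivWithin le_rfl hu)
  set M' : ℝ := max M 0 + 1 with hM'def
  have hM'pos : 0 < M' := by positivity
  refine ⟨M' / n.factorial, by positivity,
    fun q => iteratedDerivWithin q ψ (Icc (0:ℝ) (1/2)) 0 / q.factorial, fun x hx => ?_⟩
  have htay := taylor_mean_remainder_bound (f := ψ) (a := (0:ℝ)) (b := 1/2) (C := M') (n := n)
      (by norm_num) hψ hx (fun y hy => le_trans (hM y hy) (by simp [hM'def]; nlinarith [le_max_left M 0]))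
  rw [taylor_within_apply] at htay
  have hsum : (∑ k ∈ Finset.range (n+1), (((k.factorial : ℝ))⁻¹ * (x - 0) ^ k) •
        iteratedDerivWithin k ψ (Icc (0:ℝ) (1/2)) 0)
      = ∑ q ∈ Finset.range (n+1),
        (iteratedDerivWithin q ψ (Icc (0:ℝ) (1/2)) 0 / q.factorial) * x ^ q := by
    refine Finset.sum_congr rfl fun k _ => ?_
    rw [smul_eq_mul, sub_zero]; ring
  rw [hsum] at htay
  calc |ψ x - _| ≤ M' * (x - 0)^(n+1) / n.factorial := htay
    _ = M' / n.factorial * x ^ (n+1) := by rw [sub_zero]; ring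

lemma aux_sum_psi (K L : ℕ) (a : ℕ → ℝ)
    (hmom : ∀ q ≤ L, ∑ k ∈ Finset.range (K + 1), (k : ℝ) ^ q * a k = 0)
    {ψ : ℝ → ℝ} (hψ : ContDiffOn ℝ (L + 1) ψ (Icc (0:ℝ) (1/2))) :
    ∃ C > 0, ∀ u : ℝ, (2 * K + 2 : ℝ) ≤ u →
      |∑ p ∈ Finset.range (K + 1), a p * ψ (p / u)| ≤ C * u ^ (-((L:ℝ)+1)) := by
  obtain ⟨C, hCpos, c, hC⟩ := aux_taylor hψ
  refine ⟨C * (K:ℝ)^(L+1) * (∑ p ∈ Finset.range (K+1), |a p|) + 1, by positivity, fun u hu => ?_⟩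
  have hupos : (0:ℝ) < u := lt_of_lt_of_le (by positivity) hu
  have hmem : ∀ p ∈ Finset.range (K+1), ((p:ℝ)/u) ∈ Icc (0:ℝ) (1/2) := by
    intro p hp
    have hpK : (p:ℝ) ≤ K := by
      have := Finset.mem_range.mp hp; exact_mod_cast Nat.lt_succ_iff.mp this
    constructor
    · positivity
    · rw [div_le_iff₀ hupos]
      nlinarith [hpK, (Nat.cast_nonneg p : (0:ℝ) ≤ p)]
  -- polynomial part vanishes
  have hpoly : ∑ p ∈ Finset.range (K+1), a p * (∑ q ∈ Finset.range (L+1), c q * ((p:ℝ)/u) ^ q) = 0 := by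
    simp_rw [Finset.mul_sum]
    rw [Finset.sum_comm]
    refine Finset.sum_eq_zero fun q hq => ?_
    have hq' : q ≤ L := Nat.lt_succ_iff.mp (Finset.mem_range.mp hq)
    have : ∀ p ∈ Finset.range (K+1), a p * (c q * ((p:ℝ)/u) ^ q)
        = (c q / u ^ q) * ((p:ℝ) ^ q * a p) := by
      intro p hp; rw [div_pow]; ring
    rw [Finset.sum_congr rfl this, ← Finset.mul_sum, hmom q hq', mul_zero]
  -- main estimate
  have key : ∑ p ∈ Finset.range (K+1), a p * ψ ((p:ℝ)/u)
      = ∑ p ∈ Finset.range (K+1), a p * (ψ ((p:ℝ)/u) - ∑ q ∈ Finset.range (L+1), c q * ((p:ℝ)/u) ^ q) := by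
    conv_rhs => simp only [mul_sub]
    rw [Finset.sum_sub_distrib, hpoly, sub_zero]
  rw [key]
  have hb : ∀ p ∈ Finset.range (K+1),
      |a p * (ψ ((p:ℝ)/u) - ∑ q ∈ Finset.range (L+1), c q * ((p:ℝ)/u) ^ q)|
        ≤ |a p| * (C * ((K:ℝ)/u) ^ (L+1)) := by
    intro p hp
    rw [abs_mul]
    refine mul_le_mul_of_nonneg_left ?_ (abs_nonneg _)
    refine le_trans (hC _ (hmem p hp)) ?_
    have hpK : (p:ℝ) ≤ K := by
      have := Finset.mem_range.mp hp; exact_mod_cast Nat.lt_succ_iff.mp this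
    have h1 : ((p:ℝ)/u) ≤ (K:ℝ)/u := by gcongr
    have h0 : (0:ℝ) ≤ (p:ℝ)/u := by positivity
    have := pow_le_pow_left₀ h0 h1 (L+1)
    nlinarith
  refine le_trans (Finset.abs_sum_le_sum_abs _ _) (le_trans (Finset.sum_le_sum hb) ?_)
  have hrw : u ^ (-((L:ℝ)+1)) = ((u:ℝ) ^ (L+1 : ℕ))⁻¹ := by
    rw [← Real.rpow_natCast u (L+1), ← Real.rpow_neg hupos.le]
    norm_num
  have hKu : ((K:ℝ)/u) ^ (L+1) = (K:ℝ)^(L+1) * ((u:ℝ) ^ (L+1 : ℕ))⁻¹ := by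
    rw [div_pow]; ring
  rw [← Finset.sum_mul]
  rw [hrw]
  have hupow : (0:ℝ) < ((u:ℝ) ^ (L+1 : ℕ))⁻¹ := by positivity
  calc (∑ p ∈ Finset.range (K+1), |a p|) * (C * ((K:ℝ)/u) ^ (L+1))
      = (C * (K:ℝ)^(L+1) * (∑ p ∈ Finset.range (K+1), |a p|)) * ((u:ℝ) ^ (L+1 : ℕ))⁻¹ := by
        rw [hKu]; ring
    _ ≤ (C * (K:ℝ)^(L+1) * (∑ p ∈ Finset.range (K+1), |a p|) + 1) * ((u:ℝ) ^ (L+1 : ℕ))⁻¹ := by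
        nlinarith

lemma aux_contdiff (ε : ℝ) (hε : ε = 1 ∨ ε = -1) (H : ℝ) (n : ℕ∞) :
    ContDiffOn ℝ n (fun x : ℝ => (1 + ε * x) ^ H) (Icc (0:ℝ) (1/2)) := by
  refine ContDiffOn.rpow_const_of_ne ?_ ?_
  · exact (contDiff_const.add (contDiff_const.mul contDiff_id)).contDiffOn
  · intro x hx
    rcases hε with rfl | rfl
    · nlinarith [hx.1, hx.2]
    · nlinarith [hx.1, hx.2]

lemma aux_tail (K L : ℕ) (a : ℕ → ℝ)
    (hmom : ∀ q ≤ L, ∑ k ∈ Finset.range (K + 1), (k : ℝ) ^ q * a k = 0) (H : ℝ) :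
    ∃ C > 0, ∀ t : ℝ, (2 * K + 2 : ℝ) ≤ |t| →
      |∑ p ∈ Finset.range (K + 1), a p * |(p:ℝ) - t| ^ H| ≤ C * |t| ^ (H - ((L:ℝ)+1)) := by
  obtain ⟨Cm, hCm, hm⟩ := aux_sum_psi K L a hmom (ψ := fun x => (1 + (-1) * x) ^ H)
      (aux_contdiff (-1) (Or.inr rfl) H _)
  obtain ⟨Cp, hCp, hp⟩ := aux_sum_psi K L a hmom (ψ := fun x => (1 + 1 * x) ^ H)
      (aux_contdiff 1 (Or.inl rfl) H _)
  refine ⟨max Cm Cp, lt_max_of_lt_left hCm, fun t ht => ?_⟩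
  have habs : (0:ℝ) < |t| := lt_of_lt_of_le (by positivity) ht
  have hKle : ∀ p ∈ Finset.range (K+1), (p:ℝ) ≤ K := fun p hp => by
    exact_mod_cast Nat.lt_succ_iff.mp (Finset.mem_range.mp hp)
  rcases le_or_gt 0 t with htpos | htneg
  · -- t ≥ 0
    have ht' : (2*K+2:ℝ) ≤ t := by rwa [abs_of_nonneg htpos] at ht
    have htpos' : 0 < t := lt_of_lt_of_le (by positivity) ht'
    have hrw : ∀ p ∈ Finset.range (K+1),
        a p * |(p:ℝ) - t| ^ H = t ^ H * (a p * (1 + (-1) * ((p:ℝ)/t)) ^ H) := by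
      intro p hp
      have hfrac : (0:ℝ) ≤ 1 + (-1) * ((p:ℝ)/t) := by
        have h2 : (p:ℝ)/t ≤ 1 := by
          rw [div_le_one htpos']; nlinarith [hKle p hp]
        linarith
      have h1 : |(p:ℝ) - t| = t * (1 + (-1) * ((p:ℝ)/t)) := by
        rw [abs_of_nonpos (by nlinarith [hKle p hp])]
        field_simp
        ring
      rw [h1, Real.mul_rpow htpos'.le hfrac]; ring
    rw [Finset.sum_congr rfl hrw, ← Finset.mul_sum, abs_mul,
      abs_of_nonneg (Real.rpow_nonneg htpos'.le H)]
    have := hm t ht'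
    calc t ^ H * |∑ p ∈ Finset.range (K+1), a p * (1 + (-1) * ((p:ℝ)/t)) ^ H|
        ≤ t ^ H * (Cm * t ^ (-((L:ℝ)+1))) := by
          refine mul_le_mul_of_nonneg_left ?_ (Real.rpow_nonneg htpos'.le H)
          exact this
      _ ≤ max Cm Cp * |t| ^ (H - ((L:ℝ)+1)) := by
          rw [abs_of_nonneg htpos]
          rw [show H - ((L:ℝ)+1) = H + (-((L:ℝ)+1)) by ring, Real.rpow_add htpos',
            show t ^ H * (Cm * t ^ (-((L:ℝ)+1))) = Cm * (t ^ H * t ^ (-((L:ℝ)+1))) by ring]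
          exact mul_le_mul_of_nonneg_right (le_max_left _ _) (by positivity)
  · -- t < 0
    set u : ℝ := -t with hu
    have hu0 : 0 < u := by simp [hu]; linarith
    have habs_u : |t| = u := abs_of_neg htneg
    have ht' : (2*K+2:ℝ) ≤ u := by rwa [habs_u] at ht
    have hrw : ∀ p ∈ Finset.range (K+1),
        a p * |(p:ℝ) - t| ^ H = u ^ H * (a p * (1 + 1 * ((p:ℝ)/u)) ^ H) := by
      intro p hp
      have hfrac : (0:ℝ) ≤ 1 + 1 * ((p:ℝ)/u) := by positivity
      have h1 : |(p:ℝ) - t| = u * (1 + 1 * ((p:ℝ)/u)) := by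
        rw [abs_of_nonneg (by nlinarith [(Nat.cast_nonneg p : (0:ℝ) ≤ p)])]
        field_simp
        ring
      rw [h1, Real.mul_rpow hu0.le hfrac]; ring
    rw [Finset.sum_congr rfl hrw, ← Finset.mul_sum, abs_mul,
      abs_of_nonneg (Real.rpow_nonneg hu0.le H)]
    have := hp u ht'
    calc u ^ H * |∑ p ∈ Finset.range (K+1), a p * (1 + 1 * ((p:ℝ)/u)) ^ H|
        ≤ u ^ H * (Cp * u ^ (-((L:ℝ)+1))) := by
          refine mul_le_mul_of_nonneg_left ?_ (Real.rpow_nonneg hu0.le H)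
          exact this
      _ ≤ max Cm Cp * |t| ^ (H - ((L:ℝ)+1)) := by
          rw [habs_u]
          rw [show H - ((L:ℝ)+1) = H + (-((L:ℝ)+1)) by ring, Real.rpow_add hu0,
            show u ^ H * (Cp * u ^ (-((L:ℝ)+1))) = Cp * (u ^ H * u ^ (-((L:ℝ)+1))) by ring]
          exact mul_le_mul_of_nonneg_right (le_max_right _ _) (by positivity)

lemma aux_meas_rpow (r : ℝ) : Measurable (fun t : ℝ => ENNReal.ofReal (|t| ^ r)) :=
  (measurable_id.abs.pow measurable_const).ennreal_ofReal

lemma aux_shift (fE : ℝ → ℝ≥0∞) (hf : Measurable fE) (c : ℝ) {A : Set ℝ} (hA : MeasurableSet A) :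
    ∫⁻ t in ((· + c) ⁻¹' A), fE (t + c) = ∫⁻ u in A, fE u :=
  (measurePreserving_add_right volume c).setLIntegral_comp_preimage hA hf

lemma aux_neg (fE : ℝ → ℝ≥0∞) (hf : Measurable fE) {A : Set ℝ} (hA : MeasurableSet A) :
    ∫⁻ t in (Neg.neg ⁻¹' A), fE (-t) = ∫⁻ u in A, fE u :=
  (Measure.measurePreserving_neg volume).setLIntegral_comp_preimage hA hf

lemma aux_half (r : ℝ) {M : ℝ} (hr : -1 < r) (hM : 0 ≤ M) :
    ∫⁻ t in Icc (0:ℝ) M, ENNReal.ofReal (|t| ^ r) = ENNReal.ofReal (M ^ (r+1) / (r+1)) := by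
  have h1 : ∫⁻ t in Icc (0:ℝ) M, ENNReal.ofReal (|t| ^ r)
      = ∫⁻ t in Icc (0:ℝ) M, ENNReal.ofReal (t ^ r) := by
    refine setLIntegral_congr_fun_ae measurableSet_Icc (ae_of_all _ fun t ht => ?_)
    rw [abs_of_nonneg ht.1]
  have hint : IntegrableOn (fun t : ℝ => t ^ r) (Icc (0:ℝ) M) :=
    (intervalIntegrable_iff_integrableOn_Icc_of_le hM).mp (intervalIntegral.intervalIntegrable_rpow' hr)
  have hnn : (0:ℝ → ℝ) ≤ᵐ[volume.restrict (Icc (0:ℝ) M)] fun t => t ^ r :=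
    (ae_restrict_iff' measurableSet_Icc).2 (ae_of_all _ fun t ht => Real.rpow_nonneg ht.1 r)
  rw [h1, ← ofReal_integral_eq_lintegral_ofReal hint hnn]
  congr 1
  rw [MeasureTheory.integral_Icc_eq_integral_Ioc, ← intervalIntegral.integral_of_le hM,
    integral_rpow (Or.inl hr), Real.zero_rpow (by linarith : r + 1 ≠ 0)]
  ring

lemma aux_L1 {r : ℝ} (hr : -1 < r) {M : ℝ} (hM : 0 ≤ M) :
    ∫⁻ t in {t : ℝ | |t| ≤ M}, ENNReal.ofReal (|t| ^ r)
      ≤ ENNReal.ofReal (2 * M ^ (r+1) / (r+1)) := by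
  have hneg : ∫⁻ t in Icc (-M) (0:ℝ), ENNReal.ofReal (|t| ^ r)
      = ∫⁻ t in Icc (0:ℝ) M, ENNReal.ofReal (|t| ^ r) := by
    have hpre : Icc (-M) (0:ℝ) = Neg.neg ⁻¹' (Icc (0:ℝ) M) := by
      ext t; simp only [mem_Icc, mem_preimage, neg_le, le_neg]; constructor <;> (intro h; exact ⟨by linarith [h.1, h.2], by linarith [h.1, h.2]⟩)
    rw [hpre]
    calc ∫⁻ t in (Neg.neg ⁻¹' Icc (0:ℝ) M), ENNReal.ofReal (|t| ^ r)
        = ∫⁻ t in (Neg.neg ⁻¹' Icc (0:ℝ) M), ENNReal.ofReal (|(-t)| ^ r) := by simp_rw [abs_neg]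
      _ = _ := aux_neg _ (aux_meas_rpow r) measurableSet_Icc
  have hsub : {t : ℝ | |t| ≤ M} ⊆ Icc (-M) 0 ∪ Icc 0 M := by
    intro t ht
    have h' : -M ≤ t ∧ t ≤ M := abs_le.mp ht
    rcases le_or_gt t 0 with h | h
    · exact Or.inl ⟨h'.1, h⟩
    · exact Or.inr ⟨h.le, h'.2⟩
  calc ∫⁻ t in {t : ℝ | |t| ≤ M}, ENNReal.ofReal (|t| ^ r)
      ≤ ∫⁻ t in Icc (-M) 0 ∪ Icc 0 M, ENNReal.ofReal (|t| ^ r) := lintegral_mono_set hsub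
    _ ≤ (∫⁻ t in Icc (-M) (0:ℝ), ENNReal.ofReal (|t| ^ r))
        + ∫⁻ t in Icc (0:ℝ) M, ENNReal.ofReal (|t| ^ r) := lintegral_union_le _ _ _
    _ = ENNReal.ofReal (M ^ (r+1) / (r+1)) + ENNReal.ofReal (M ^ (r+1) / (r+1)) := by
        rw [hneg, aux_half r hr hM]
    _ ≤ ENNReal.ofReal (2 * M ^ (r+1) / (r+1)) := by
        have h0 : (0:ℝ) ≤ M ^ (r+1) / (r+1) := div_nonneg (Real.rpow_nonneg hM _) (by linarith)
        rw [← ENNReal.ofReal_add h0 h0]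
        apply ENNReal.ofReal_le_ofReal
        ring_nf
        exact le_refl _

lemma aux_L2 {r : ℝ} (hr : r < -1) {c : ℝ} (hc : 0 < c) :
    ∫⁻ t in {t : ℝ | c ≤ |t|}, ENNReal.ofReal (|t| ^ r)
      ≤ ENNReal.ofReal (2 * c ^ (r+1) / (-(r+1))) := by
  have hpos : ∫⁻ t in Ici c, ENNReal.ofReal (|t| ^ r) = ENNReal.ofReal (c ^ (r+1) / (-(r+1))) := by
    have h1 : ∫⁻ t in Ici c, ENNReal.ofReal (|t| ^ r)
        = ∫⁻ t in Ici c, ENNReal.ofReal (t ^ r) := by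
      refine setLIntegral_congr_fun_ae measurableSet_Ici (ae_of_all _ fun t ht => ?_)
      rw [abs_of_nonneg (le_trans hc.le ht)]
    have hint : IntegrableOn (fun t : ℝ => t ^ r) (Ici c) :=
      Iff.mpr integrableOn_Ici_iff_integrableOn_Ioi (integrableOn_Ioi_rpow_of_lt hr hc)
    have hnn : (0:ℝ → ℝ) ≤ᵐ[volume.restrict (Ici c)] fun t => t ^ r :=
      (ae_restrict_iff' measurableSet_Ici).2
        (ae_of_all _ fun t ht => Real.rpow_nonneg (le_trans hc.le ht) r)
    rw [h1, ← ofReal_integral_eq_lintegral_ofReal hint hnn]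
    congr 1
    rw [MeasureTheory.integral_Ici_eq_integral_Ioi, integral_Ioi_rpow_of_lt hr hc,
      div_neg, neg_div]
  have hneg : ∫⁻ t in Iic (-c), ENNReal.ofReal (|t| ^ r)
      = ∫⁻ t in Ici c, ENNReal.ofReal (|t| ^ r) := by
    have hpre : Iic (-c) = Neg.neg ⁻¹' (Ici c) := by
      ext t; simp only [mem_Iic, mem_preimage, mem_Ici, le_neg]
    rw [hpre]
    calc ∫⁻ t in (Neg.neg ⁻¹' Ici c), ENNReal.ofReal (|t| ^ r)
        = ∫⁻ t in (Neg.neg ⁻¹' Ici c), ENNReal.ofReal (|(-t)| ^ r) := by simp_rw [abs_neg]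
      _ = _ := aux_neg _ (aux_meas_rpow r) measurableSet_Ici
  have hsub : {t : ℝ | c ≤ |t|} ⊆ Iic (-c) ∪ Ici c := by
    intro t ht
    rcases le_abs.mp (show c ≤ |t| from ht) with h | h
    · exact Or.inr h
    · exact Or.inl (by simpa [mem_Iic, le_neg] using h)
  have hcr : (0:ℝ) ≤ c ^ (r+1) / (-(r+1)) := by
    apply div_nonneg (Real.rpow_nonneg hc.le _); linarith
  calc ∫⁻ t in {t : ℝ | c ≤ |t|}, ENNReal.ofReal (|t| ^ r)
      ≤ ∫⁻ t in Iic (-c) ∪ Ici c, ENNReal.ofReal (|t| ^ r) := lintegral_mono_set hsub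
    _ ≤ (∫⁻ t in Iic (-c), ENNReal.ofReal (|t| ^ r))
        + ∫⁻ t in Ici c, ENNReal.ofReal (|t| ^ r) := lintegral_union_le _ _ _
    _ = ENNReal.ofReal (c ^ (r+1) / (-(r+1))) + ENNReal.ofReal (c ^ (r+1) / (-(r+1))) := by
        rw [hneg, hpos]
    _ ≤ ENNReal.ofReal (2 * c ^ (r+1) / (-(r+1))) := by
        rw [← ENNReal.ofReal_add hcr hcr]
        apply ENNReal.ofReal_le_ofReal
        ring_nf
        exact le_refl _

set_option maxHeartbeats 4000000 in
theorem translate_product_decay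
    (K L : ℕ) (hK : 1 ≤ K) (hL : 1 ≤ L) (a : ℕ → ℝ)
    (hmom : ∀ q ≤ L, ∑ k ∈ Finset.range (K + 1), (k : ℝ) ^ q * a k = 0)
    (hmom' : ∑ k ∈ Finset.range (K + 1), (k : ℝ) ^ (L + 1) * a k ≠ 0)
    (α : ℝ) (hα : 0 < α) (hα2 : α ≤ 2) (H₀ : ℝ) (hH₀ : H₀ ∈ Set.Ioo (0 : ℝ) 1) :
    ∃ C > (0 : ℝ), ∃ K₀ : ℕ, 1 ≤ K₀ ∧ ∀ m : ℤ, (K₀ : ℤ) ≤ |m| →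
      ∫⁻ s : ℝ, ENNReal.ofReal
          (|∑ p ∈ Finset.range (K + 1), a p * |(p : ℝ) - s| ^ (H₀ - 1 / α)| ^ (α / 2) *
            |∑ p' ∈ Finset.range (K + 1),
                a p' * |(p' : ℝ) - s - (m : ℝ)| ^ (H₀ - 1 / α)| ^ (α / 2))
        ≤ ENNReal.ofReal (C * |(m : ℝ)| ^ (α * (H₀ - ((L : ℝ) + 1)) / 2)) := by
  obtain ⟨hH0, hH1⟩ := hH₀
  set H : ℝ := H₀ - 1 / α with hHdef
  set β : ℝ := α * (H₀ - ((L : ℝ) + 1)) / 2 with hβdef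
  have hL1 : (1:ℝ) ≤ (L:ℝ) := by exact_mod_cast hL
  have hβneg : β < 0 := by
    rw [hβdef]
    apply div_neg_of_neg_of_pos _ two_pos
    apply mul_neg_of_pos_of_neg hα
    linarith
  set δ : ℝ := β - 2⁻¹ with hδdef
  set γ : ℝ := (α * H₀ - 1) / 2 with hγdef
  have hγgt : (-1:ℝ) < γ := by
    rw [hγdef]; nlinarith
  have hγ1 : (0:ℝ) < γ + 1 := by linarith
  have hδeq : (H - ((L:ℝ)+1)) * (α/2) = δ := by
    rw [hHdef, hδdef, hβdef]
    field_simp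
    ring
  have hγeq : H * (α/2) = γ := by
    rw [hHdef, hγdef]
    field_simp
  have hδneg : δ ≤ -2⁻¹ := by rw [hδdef]; linarith
  have h2δ : 2*δ < -1 := by rw [hδdef]; linarith
  -- the function and its bounds
  set f : ℝ → ℝ := fun t => ∑ p ∈ Finset.range (K+1), a p * |(p:ℝ) - t| ^ H with hfdef
  set g : ℝ → ℝ := fun t => |f t| ^ (α/2) with hgdef
  set gE : ℝ → ℝ≥0∞ := fun t => ENNReal.ofReal (g t) with hgEdef
  have hg0 : ∀ t, 0 ≤ g t := fun t => Real.rpow_nonneg (abs_nonneg _) _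
  have hfmeas : Measurable f := by
    apply Finset.measurable_sum
    intro p _
    exact measurable_const.mul (((measurable_const.sub measurable_id).abs).pow measurable_const)
  have hgEmeas : Measurable gE := (hfmeas.abs.pow measurable_const).ennreal_ofReal
  obtain ⟨C₁, hC₁pos, hC₁⟩ := aux_tail K L a hmom H
  set C₂ : ℝ := C₁ ^ (α/2) with hC₂def
  have hC₂pos : 0 < C₂ := Real.rpow_pos_of_pos hC₁pos _
  set T : ℝ := 2*(K:ℝ)+2 with hTdef
  have hTpos : (0:ℝ) < T := by rw [hTdef]; positivity
  have hT1 : (1:ℝ) ≤ T := by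
    have : (0:ℝ) ≤ (K:ℝ) := Nat.cast_nonneg K
    rw [hTdef]; linarith
  have htail : ∀ t : ℝ, T ≤ |t| → g t ≤ C₂ * |t| ^ δ := by
    intro t ht
    have h1 := Real.rpow_le_rpow (abs_nonneg _) (hC₁ t ht) (by positivity : (0:ℝ) ≤ α/2)
    rw [Real.mul_rpow hC₁pos.le (Real.rpow_nonneg (abs_nonneg t) _),
      ← Real.rpow_mul (abs_nonneg t), hδeq] at h1
    exact h1
  set b : ℕ → ℝ := fun p => |a p| ^ (α/2) with hbdef
  have hb0 : ∀ p, 0 ≤ b p := fun p => Real.rpow_nonneg (abs_nonneg _) _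
  have hloc : ∀ t : ℝ, g t ≤ ∑ p ∈ Finset.range (K+1), b p * |(p:ℝ) - t| ^ γ := by
    intro t
    have h1 : |f t| ≤ ∑ p ∈ Finset.range (K+1), |a p| * |(p:ℝ) - t| ^ H := by
      refine le_trans (Finset.abs_sum_le_sum_abs _ _) (le_of_eq ?_)
      refine Finset.sum_congr rfl fun p _ => ?_
      rw [abs_mul, abs_of_nonneg (Real.rpow_nonneg (abs_nonneg _) _)]
    have h2 : g t ≤ (∑ p ∈ Finset.range (K+1), |a p| * |(p:ℝ) - t| ^ H) ^ (α/2) :=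
      Real.rpow_le_rpow (abs_nonneg _) h1 (by positivity)
    refine le_trans h2 (le_trans (aux_rpow_sum_le _ _
      (fun p _ => by positivity) (by positivity) (by linarith)) (le_of_eq ?_))
    refine Finset.sum_congr rfl fun p _ => ?_
    rw [Real.mul_rpow (abs_nonneg _) (Real.rpow_nonneg (abs_nonneg _) _),
      ← Real.rpow_mul (abs_nonneg _), hγeq]
  -- constants
  set Sb : ℝ := ∑ p ∈ Finset.range (K+1), b p with hSbdef
  have hSb0 : 0 ≤ Sb := Finset.sum_nonneg fun p _ => hb0 p
  set cγ : ℝ := 2 * (T + K) ^ (γ+1) / (γ+1) with hcγdef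
  have hcγ0 : 0 ≤ cγ := by
    apply div_nonneg _ hγ1.le
    have : (0:ℝ) ≤ (T + K) ^ (γ+1) := Real.rpow_nonneg (by positivity) _
    linarith
  set Cloc : ℝ := Sb * cγ with hClocdef
  have hCloc0 : 0 ≤ Cloc := mul_nonneg hSb0 hcγ0
  have hmeasR : ∀ R : ℝ, MeasurableSet {u : ℝ | |u| ≤ R} :=
    fun R => measurableSet_le measurable_id.abs measurable_const
  have hmeasGe : ∀ R : ℝ, MeasurableSet {u : ℝ | R ≤ |u|} :=
    fun R => measurableSet_le measurable_const measurable_id.abs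
  have hmid : ∀ R : ℝ, T ≤ R →
      ∫⁻ u in {u : ℝ | |u| ≤ R}, gE u ≤ ENNReal.ofReal (Cloc + 4*C₂*R^(2⁻¹:ℝ)) := by
    intro R hR
    have hRpos : (0:ℝ) < R := lt_of_lt_of_le hTpos hR
    set S2 : Set ℝ := {u : ℝ | T ≤ |u|} ∩ {u : ℝ | |u| ≤ R} with hS2def
    have hS2meas : MeasurableSet S2 := (hmeasGe T).inter (hmeasR R)
    have hsub : {u : ℝ | |u| ≤ R} ⊆ {u : ℝ | |u| ≤ T} ∪ S2 := by
      intro u hu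
      rcases le_or_gt |u| T with h | h
      · exact Or.inl h
      · exact Or.inr ⟨h.le, hu⟩
    have part1 : ∫⁻ u in {u : ℝ | |u| ≤ T}, gE u ≤ ENNReal.ofReal Cloc := by
      have perP : ∀ p ∈ Finset.range (K+1),
          ∫⁻ u in {u : ℝ | |u| ≤ T}, ENNReal.ofReal (b p * |(p:ℝ) - u| ^ γ)
            ≤ ENNReal.ofReal (b p * cγ) := by
        intro p hp
        have hpK : (p:ℝ) ≤ K := by
          exact_mod_cast Nat.lt_succ_iff.mp (Finset.mem_range.mp hp)
        have hp0 : (0:ℝ) ≤ (p:ℝ) := Nat.cast_nonneg p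
        have step : ∫⁻ u in {u : ℝ | |u| ≤ T}, ENNReal.ofReal (|(p:ℝ) - u| ^ γ)
            ≤ ENNReal.ofReal cγ := by
          have hrw : ∀ u : ℝ, ENNReal.ofReal (|(p:ℝ) - u| ^ γ)
              = (fun w : ℝ => ENNReal.ofReal (|w| ^ γ)) (u + (-(p:ℝ))) := by
            intro u
            simp only [← sub_eq_add_neg]
            rw [abs_sub_comm]
          calc ∫⁻ u in {u : ℝ | |u| ≤ T}, ENNReal.ofReal (|(p:ℝ) - u| ^ γ)
              = ∫⁻ u in {u : ℝ | |u| ≤ T},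
                  (fun w : ℝ => ENNReal.ofReal (|w| ^ γ)) (u + (-(p:ℝ))) := by
                  exact lintegral_congr fun u => hrw u
            _ ≤ ∫⁻ u in ((· + (-(p:ℝ))) ⁻¹' {w : ℝ | |w| ≤ T + K}),
                  (fun w : ℝ => ENNReal.ofReal (|w| ^ γ)) (u + (-(p:ℝ))) := by
                  refine lintegral_mono_set ?_
                  intro u hu
                  have h1 : |u| ≤ T := hu
                  have : |u + (-(p:ℝ))| ≤ |u| + |(-(p:ℝ))| := abs_add_le _ _
                  simp only [mem_preimage, mem_setOf_eq]
                  rw [abs_neg, abs_of_nonneg hp0] at this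
                  linarith
            _ = ∫⁻ w in {w : ℝ | |w| ≤ T + K}, ENNReal.ofReal (|w| ^ γ) :=
                  aux_shift _ (aux_meas_rpow γ) _ (hmeasR _)
            _ ≤ ENNReal.ofReal (2 * (T + K) ^ (γ+1) / (γ+1)) := aux_L1 hγgt (by positivity)
            _ = ENNReal.ofReal cγ := by rw [hcγdef]
        calc ∫⁻ u in {u : ℝ | |u| ≤ T}, ENNReal.ofReal (b p * |(p:ℝ) - u| ^ γ)
            = ∫⁻ u in {u : ℝ | |u| ≤ T},
                ENNReal.ofReal (b p) * ENNReal.ofReal (|(p:ℝ) - u| ^ γ) := by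
              refine lintegral_congr fun u => ?_
              rw [ENNReal.ofReal_mul (hb0 p)]
          _ = ENNReal.ofReal (b p) * ∫⁻ u in {u : ℝ | |u| ≤ T},
                ENNReal.ofReal (|(p:ℝ) - u| ^ γ) :=
              lintegral_const_mul' _ _ ENNReal.ofReal_ne_top
          _ ≤ ENNReal.ofReal (b p) * ENNReal.ofReal cγ := mul_le_mul_right step _
          _ = ENNReal.ofReal (b p * cγ) := (ENNReal.ofReal_mul (hb0 p)).symm
      calc ∫⁻ u in {u : ℝ | |u| ≤ T}, gE u
          ≤ ∫⁻ u in {u : ℝ | |u| ≤ T},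
              ENNReal.ofReal (∑ p ∈ Finset.range (K+1), b p * |(p:ℝ) - u| ^ γ) :=
            setLIntegral_mono' (hmeasR T) fun u _ => ENNReal.ofReal_le_ofReal (hloc u)
        _ = ∫⁻ u in {u : ℝ | |u| ≤ T},
              ∑ p ∈ Finset.range (K+1), ENNReal.ofReal (b p * |(p:ℝ) - u| ^ γ) := by
            refine lintegral_congr fun u => ENNReal.ofReal_sum_of_nonneg fun p _ => ?_
            exact mul_nonneg (hb0 p) (Real.rpow_nonneg (abs_nonneg _) _)
        _ = ∑ p ∈ Finset.range (K+1),
              ∫⁻ u in {u : ℝ | |u| ≤ T}, ENNReal.ofReal (b p * |(p:ℝ) - u| ^ γ) := by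
            refine lintegral_finset_sum _ fun p _ => ?_
            exact (measurable_const.mul (((measurable_const.sub
              measurable_id).abs).pow measurable_const)).ennreal_ofReal
        _ ≤ ∑ p ∈ Finset.range (K+1), ENNReal.ofReal (b p * cγ) := Finset.sum_le_sum perP
        _ = ENNReal.ofReal (∑ p ∈ Finset.range (K+1), b p * cγ) :=
            (ENNReal.ofReal_sum_of_nonneg fun p _ => mul_nonneg (hb0 p) hcγ0).symm
        _ = ENNReal.ofReal Cloc := by rw [hClocdef, Finset.sum_mul]
    have part2 : ∫⁻ u in S2, gE u ≤ ENNReal.ofReal (4*C₂*R^(2⁻¹:ℝ)) := by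
      have hpt : ∀ u ∈ S2, gE u ≤ ENNReal.ofReal (C₂ * |u| ^ (-2⁻¹ : ℝ)) := by
        intro u hu
        refine ENNReal.ofReal_le_ofReal (le_trans (htail u hu.1) ?_)
        have h1u : (1:ℝ) ≤ |u| := le_trans hT1 hu.1
        exact mul_le_mul_of_nonneg_left
          (Real.rpow_le_rpow_of_exponent_le h1u hδneg) hC₂pos.le
      calc ∫⁻ u in S2, gE u
          ≤ ∫⁻ u in S2, ENNReal.ofReal (C₂ * |u| ^ (-2⁻¹ : ℝ)) :=
            setLIntegral_mono' hS2meas hpt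
        _ = ENNReal.ofReal C₂ * ∫⁻ u in S2, ENNReal.ofReal (|u| ^ (-2⁻¹ : ℝ)) := by
            rw [← lintegral_const_mul' _ _ ENNReal.ofReal_ne_top]
            exact lintegral_congr fun u => by rw [ENNReal.ofReal_mul hC₂pos.le]
        _ ≤ ENNReal.ofReal C₂ * ∫⁻ u in {u : ℝ | |u| ≤ R},
              ENNReal.ofReal (|u| ^ (-2⁻¹ : ℝ)) :=
            mul_le_mul_right (lintegral_mono_set inter_subset_right) _
        _ ≤ ENNReal.ofReal C₂ * ENNReal.ofReal (2 * R ^ ((-2⁻¹:ℝ)+1) / ((-2⁻¹:ℝ)+1)) :=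
            mul_le_mul_right (aux_L1 (by norm_num) hRpos.le) _
        _ = ENNReal.ofReal (4*C₂*R^(2⁻¹:ℝ)) := by
            rw [← ENNReal.ofReal_mul hC₂pos.le]
            congr 1
            have he : ((-2⁻¹:ℝ)+1) = (2⁻¹:ℝ) := by norm_num
            rw [he]
            ring
    calc ∫⁻ u in {u : ℝ | |u| ≤ R}, gE u
        ≤ ∫⁻ u in ({u : ℝ | |u| ≤ T} ∪ S2), gE u := lintegral_mono_set hsub
      _ ≤ (∫⁻ u in {u : ℝ | |u| ≤ T}, gE u) + ∫⁻ u in S2, gE u := lintegral_union_le _ _ _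
      _ ≤ ENNReal.ofReal Cloc + ENNReal.ofReal (4*C₂*R^(2⁻¹:ℝ)) := add_le_add part1 part2
      _ = ENNReal.ofReal (Cloc + 4*C₂*R^(2⁻¹:ℝ)) := by
          rw [← ENNReal.ofReal_add hCloc0 (by positivity)]
  -- final constants
  have h2δpos : (0:ℝ) < 2 ^ δ := Real.rpow_pos_of_pos two_pos δ
  set CA : ℝ := C₂ / 2 ^ δ * (Cloc + 4*C₂) with hCAdef
  set CB : ℝ := C₂ / 2 ^ δ * (Cloc + 8*C₂) with hCBdef
  set CC0 : ℝ := 2 * 2 ^ (2*δ+1) / (-(2*δ+1)) with hCC0def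
  set CC : ℝ := (C₂ * C₂ / 2 ^ δ) * CC0 with hCCdef
  have hCA0 : 0 ≤ CA := by
    apply mul_nonneg (div_nonneg hC₂pos.le h2δpos.le); linarith
  have hCB0 : 0 ≤ CB := by
    apply mul_nonneg (div_nonneg hC₂pos.le h2δpos.le); linarith
  have hCC00 : 0 ≤ CC0 := by
    apply div_nonneg _ (by linarith : (0:ℝ) ≤ -(2*δ+1))
    have : (0:ℝ) ≤ 2 ^ (2*δ+1) := (Real.rpow_pos_of_pos two_pos _).le
    linarith
  have hCC0' : 0 ≤ CC := mul_nonneg (div_nonneg (by positivity) h2δpos.le) hCC00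
  refine ⟨CA + CB + CC + 1, by linarith, 4*K+4, by omega, fun m hm => ?_⟩
  -- basic facts about m
  set M : ℝ := |(m:ℝ)| with hMdef
  have hMcast : M = ((|m| : ℤ) : ℝ) := by rw [hMdef, Int.cast_abs]
  have hM2T : 2*T ≤ M := by
    rw [hMcast]
    have h1 : ((4*K+4 : ℕ):ℝ) ≤ ((|m|:ℤ):ℝ) := by exact_mod_cast hm
    push_cast at h1
    rw [hTdef]; linarith
  have hM1 : (1:ℝ) ≤ M := by linarith
  have hMpos : (0:ℝ) < M := by linarith
  have hMhalfT : T ≤ M/2 := by linarith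
  have hMT : T ≤ M := by linarith
  have hM3 : T ≤ 3*M := by linarith
  have hMβ0 : (0:ℝ) ≤ M ^ β := Real.rpow_nonneg hMpos.le β
  -- rewrite integrand
  have hinteq : ∀ s : ℝ,
      ENNReal.ofReal (|∑ p ∈ Finset.range (K + 1), a p * |(p : ℝ) - s| ^ H| ^ (α / 2) *
        |∑ p' ∈ Finset.range (K + 1), a p' * |(p' : ℝ) - s - (m : ℝ)| ^ H| ^ (α / 2))
        = gE s * gE (s + (m:ℝ)) := by
    intro s
    simp only [hgEdef, hgdef, hfdef]
    rw [← ENNReal.ofReal_mul (by positivity)]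
    simp_rw [sub_sub]
  -- sets
  set SA : Set ℝ := {s : ℝ | |s| ≤ M/2} with hSAdef
  set SB : Set ℝ := {s : ℝ | M/2 < |s|} ∩ {s : ℝ | |s| ≤ 2*M} with hSBdef
  set SC : Set ℝ := {s : ℝ | 2*M < |s|} with hSCdef
  have hSAmeas : MeasurableSet SA := hmeasR _
  have hSBmeas : MeasurableSet SB :=
    (measurableSet_lt measurable_const measurable_id.abs).inter (hmeasR _)
  have hSCmeas : MeasurableSet SC := measurableSet_lt measurable_const measurable_id.abs
  have hcover : ∀ s : ℝ, s ∈ SA ∪ (SB ∪ SC) := by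
    intro s
    rcases le_or_gt |s| (M/2) with h | h
    · exact Or.inl h
    · rcases le_or_gt |s| (2*M) with h2 | h2
      · exact Or.inr (Or.inl ⟨h, h2⟩)
      · exact Or.inr (Or.inr h2)
  -- lower bound |s+m| from |s| and m
  have habsadd : ∀ s : ℝ, M - |s| ≤ |s + (m:ℝ)| := by
    intro s
    have h := abs_add_le (s + (m:ℝ)) (-s)
    rw [add_neg_cancel_comm, abs_neg] at h
    rw [hMdef]; linarith
  have habsadd2 : ∀ s : ℝ, |s| - M ≤ |s + (m:ℝ)| := by
    intro s
    have h := abs_add_le (s + (m:ℝ)) (-(m:ℝ))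
    rw [add_neg_cancel_right, abs_neg] at h
    rw [hMdef]; linarith
  -- Piece A
  have hA : ∫⁻ s in SA, gE s * gE (s + (m:ℝ)) ≤ ENNReal.ofReal (CA * M ^ β) := by
    have hpt : ∀ s ∈ SA, gE s * gE (s + (m:ℝ)) ≤ gE s * ENNReal.ofReal (C₂ * (M/2)^δ) := by
      intro s hs
      have hs' : |s| ≤ M/2 := hs
      have habs : M/2 ≤ |s + (m:ℝ)| := by have := habsadd s; linarith
      have hT' : T ≤ |s + (m:ℝ)| := le_trans hMhalfT habs
      refine mul_le_mul_right (ENNReal.ofReal_le_ofReal ?_) _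
      calc g (s + (m:ℝ)) ≤ C₂ * |s + (m:ℝ)| ^ δ := htail _ hT'
        _ ≤ C₂ * (M/2) ^ δ := mul_le_mul_of_nonneg_left
            (Real.rpow_le_rpow_of_nonpos (by linarith) habs (by linarith)) hC₂pos.le
    have hconst0 : (0:ℝ) ≤ C₂ * (M/2)^δ :=
      mul_nonneg hC₂pos.le (Real.rpow_nonneg (by linarith) _)
    calc ∫⁻ s in SA, gE s * gE (s + (m:ℝ))
        ≤ ∫⁻ s in SA, gE s * ENNReal.ofReal (C₂ * (M/2)^δ) := setLIntegral_mono' hSAmeas hpt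
      _ = ENNReal.ofReal (C₂ * (M/2)^δ) * ∫⁻ s in SA, gE s := by
          rw [lintegral_mul_const' _ _ ENNReal.ofReal_ne_top, mul_comm]
      _ ≤ ENNReal.ofReal (C₂ * (M/2)^δ) * ENNReal.ofReal (Cloc + 4*C₂*(M/2)^(2⁻¹:ℝ)) :=
          mul_le_mul_right (hmid (M/2) hMhalfT) _
      _ ≤ ENNReal.ofReal (CA * M ^ β) := by
          rw [← ENNReal.ofReal_mul hconst0]
          apply ENNReal.ofReal_le_ofReal
          have e1 : (M/2)^δ = M^δ / 2^δ := Real.div_rpow hMpos.le (by norm_num : (0:ℝ) ≤ 2) δ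
          have e2 : (M/2)^(2⁻¹:ℝ) ≤ M^(2⁻¹:ℝ) :=
            Real.rpow_le_rpow (by linarith) (by linarith) (by norm_num)
          have e3 : (1:ℝ) ≤ M^(2⁻¹:ℝ) := by
            calc (1:ℝ) = 1 ^ (2⁻¹:ℝ) := (Real.one_rpow _).symm
              _ ≤ M^(2⁻¹:ℝ) := Real.rpow_le_rpow zero_le_one hM1 (by norm_num)
          have e4 : Cloc + 4*C₂*(M/2)^(2⁻¹:ℝ) ≤ (Cloc + 4*C₂) * M^(2⁻¹:ℝ) := by
            have f1 := mul_le_mul_of_nonneg_left e2 (by positivity : (0:ℝ) ≤ 4*C₂)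
            have f2 := mul_le_mul_of_nonneg_left e3 hCloc0
            ring_nf at f1 f2 ⊢
            linarith
          have e5 : M^δ * M^(2⁻¹:ℝ) = M^β := by
            rw [← Real.rpow_add hMpos]; congr 1; rw [hδdef]; ring
          calc C₂ * (M/2)^δ * (Cloc + 4*C₂*(M/2)^(2⁻¹:ℝ))
              ≤ C₂ * (M/2)^δ * ((Cloc + 4*C₂) * M^(2⁻¹:ℝ)) :=
              mul_le_mul_of_nonneg_left e4 hconst0
            _ = CA * (M^δ * M^(2⁻¹:ℝ)) := by rw [e1, hCAdef]; ring
            _ = CA * M^β := by rw [e5]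
  -- Piece B
  have hB : ∫⁻ s in SB, gE s * gE (s + (m:ℝ)) ≤ ENNReal.ofReal (CB * M ^ β) := by
    have hpt : ∀ s ∈ SB, gE s * gE (s + (m:ℝ))
        ≤ ENNReal.ofReal (C₂ * (M/2)^δ) * gE (s + (m:ℝ)) := by
      intro s hs
      have hs1 : M/2 < |s| := hs.1
      have hT' : T ≤ |s| := le_trans hMhalfT hs1.le
      refine mul_le_mul_left (ENNReal.ofReal_le_ofReal ?_) _
      calc g s ≤ C₂ * |s| ^ δ := htail _ hT'
        _ ≤ C₂ * (M/2) ^ δ := mul_le_mul_of_nonneg_left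
            (Real.rpow_le_rpow_of_nonpos (by linarith) hs1.le (by linarith)) hC₂pos.le
    have hconst0 : (0:ℝ) ≤ C₂ * (M/2)^δ :=
      mul_nonneg hC₂pos.le (Real.rpow_nonneg (by linarith) _)
    have hshift : ∫⁻ s in SB, gE (s + (m:ℝ)) ≤ ENNReal.ofReal (Cloc + 4*C₂*(3*M)^(2⁻¹:ℝ)) := by
      calc ∫⁻ s in SB, gE (s + (m:ℝ))
          ≤ ∫⁻ s in ((· + (m:ℝ)) ⁻¹' {u : ℝ | |u| ≤ 3*M}), gE (s + (m:ℝ)) := by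
            refine lintegral_mono_set ?_
            intro s hs
            have hs2 : |s| ≤ 2*M := hs.2
            have h := abs_add_le s (m:ℝ)
            simp only [mem_preimage, mem_setOf_eq]
            rw [← hMdef] at h
            linarith
        _ = ∫⁻ u in {u : ℝ | |u| ≤ 3*M}, gE u := aux_shift gE hgEmeas _ (hmeasR _)
        _ ≤ ENNReal.ofReal (Cloc + 4*C₂*(3*M)^(2⁻¹:ℝ)) := hmid _ hM3
    calc ∫⁻ s in SB, gE s * gE (s + (m:ℝ))
        ≤ ∫⁻ s in SB, ENNReal.ofReal (C₂ * (M/2)^δ) * gE (s + (m:ℝ)) :=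
          setLIntegral_mono' hSBmeas hpt
      _ = ENNReal.ofReal (C₂ * (M/2)^δ) * ∫⁻ s in SB, gE (s + (m:ℝ)) :=
          lintegral_const_mul' _ _ ENNReal.ofReal_ne_top
      _ ≤ ENNReal.ofReal (C₂ * (M/2)^δ) * ENNReal.ofReal (Cloc + 4*C₂*(3*M)^(2⁻¹:ℝ)) :=
          mul_le_mul_right hshift _
      _ ≤ ENNReal.ofReal (CB * M ^ β) := by
          rw [← ENNReal.ofReal_mul hconst0]
          apply ENNReal.ofReal_le_ofReal
          have e1 : (M/2)^δ = M^δ / 2^δ := Real.div_rpow hMpos.le (by norm_num : (0:ℝ) ≤ 2) δ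
          have e42 : (4:ℝ)^(2⁻¹:ℝ) = 2 := by
            rw [show (4:ℝ) = 2^(2:ℕ) by norm_num, ← Real.rpow_natCast 2 2,
              ← Real.rpow_mul (by norm_num)]
            norm_num
          have e2 : (3*M)^(2⁻¹:ℝ) ≤ 2 * M^(2⁻¹:ℝ) := by
            calc (3*M)^(2⁻¹:ℝ) ≤ (4*M)^(2⁻¹:ℝ) :=
                Real.rpow_le_rpow (by linarith) (by linarith) (by norm_num)
              _ = 2 * M^(2⁻¹:ℝ) := by
                rw [Real.mul_rpow (by norm_num) hMpos.le, e42]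
          have e3 : (1:ℝ) ≤ M^(2⁻¹:ℝ) := by
            calc (1:ℝ) = 1 ^ (2⁻¹:ℝ) := (Real.one_rpow _).symm
              _ ≤ M^(2⁻¹:ℝ) := Real.rpow_le_rpow zero_le_one hM1 (by norm_num)
          have e4 : Cloc + 4*C₂*(3*M)^(2⁻¹:ℝ) ≤ (Cloc + 8*C₂) * M^(2⁻¹:ℝ) := by
            have f1 := mul_le_mul_of_nonneg_left e2 (by positivity : (0:ℝ) ≤ 4*C₂)
            have f2 := mul_le_mul_of_nonneg_left e3 hCloc0
            ring_nf at f1 f2 ⊢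
            linarith
          have e5 : M^δ * M^(2⁻¹:ℝ) = M^β := by
            rw [← Real.rpow_add hMpos]; congr 1; rw [hδdef]; ring
          calc C₂ * (M/2)^δ * (Cloc + 4*C₂*(3*M)^(2⁻¹:ℝ))
              ≤ C₂ * (M/2)^δ * ((Cloc + 8*C₂) * M^(2⁻¹:ℝ)) :=
              mul_le_mul_of_nonneg_left e4 hconst0
            _ = CB * (M^δ * M^(2⁻¹:ℝ)) := by rw [e1, hCBdef]; ring
            _ = CB * M^β := by rw [e5]
  -- Piece C
  have hC : ∫⁻ s in SC, gE s * gE (s + (m:ℝ)) ≤ ENNReal.ofReal (CC * M ^ β) := by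
    have hpt : ∀ s ∈ SC, gE s * gE (s + (m:ℝ))
        ≤ ENNReal.ofReal ((C₂ * C₂ / 2 ^ δ) * |s| ^ (2*δ)) := by
      intro s hs
      have hs2M : 2*M < |s| := hs
      have hspos : (0:ℝ) < |s| := by linarith
      have hsT : T ≤ |s| := by linarith
      have habs2 : |s|/2 ≤ |s + (m:ℝ)| := by have := habsadd2 s; linarith
      have hT2 : T ≤ |s + (m:ℝ)| := by linarith
      have h1 : g s ≤ C₂ * |s| ^ δ := htail _ hsT
      have h2 : g (s + (m:ℝ)) ≤ C₂ * (|s|/2) ^ δ := by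
        calc g (s + (m:ℝ)) ≤ C₂ * |s + (m:ℝ)| ^ δ := htail _ hT2
          _ ≤ C₂ * (|s|/2) ^ δ := mul_le_mul_of_nonneg_left
              (Real.rpow_le_rpow_of_nonpos (by linarith) habs2 (by linarith)) hC₂pos.le
      calc gE s * gE (s + (m:ℝ)) = ENNReal.ofReal (g s * g (s + (m:ℝ))) :=
            (ENNReal.ofReal_mul (hg0 s)).symm
        _ ≤ ENNReal.ofReal ((C₂ * |s| ^ δ) * (C₂ * (|s|/2) ^ δ)) :=
            ENNReal.ofReal_le_ofReal (mul_le_mul h1 h2 (hg0 _)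
              (mul_nonneg hC₂pos.le (Real.rpow_nonneg hspos.le _)))
        _ = ENNReal.ofReal ((C₂ * C₂ / 2 ^ δ) * |s| ^ (2*δ)) := by
            congr 1
            rw [Real.div_rpow hspos.le (by norm_num),
              show (2:ℝ)*δ = δ + δ by ring, Real.rpow_add hspos]
            ring
    have hc30 : (0:ℝ) ≤ C₂ * C₂ / 2 ^ δ := by positivity
    calc ∫⁻ s in SC, gE s * gE (s + (m:ℝ))
        ≤ ∫⁻ s in SC, ENNReal.ofReal ((C₂ * C₂ / 2 ^ δ) * |s| ^ (2*δ)) :=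
          setLIntegral_mono' hSCmeas hpt
      _ = ENNReal.ofReal (C₂ * C₂ / 2 ^ δ) * ∫⁻ s in SC, ENNReal.ofReal (|s| ^ (2*δ)) := by
          rw [← lintegral_const_mul' _ _ ENNReal.ofReal_ne_top]
          exact lintegral_congr fun s => by rw [ENNReal.ofReal_mul hc30]
      _ ≤ ENNReal.ofReal (C₂ * C₂ / 2 ^ δ) *
            ∫⁻ s in {s : ℝ | 2*M ≤ |s|}, ENNReal.ofReal (|s| ^ (2*δ)) :=
          by
          have hsubC : SC ⊆ {s : ℝ | 2*M ≤ |s|} := fun s hs => le_of_lt (show 2*M < |s| from hs)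
          exact mul_le_mul_right (lintegral_mono_set hsubC) _
      _ ≤ ENNReal.ofReal (C₂ * C₂ / 2 ^ δ) *
            ENNReal.ofReal (2 * (2*M) ^ (2*δ+1) / (-(2*δ+1))) :=
          mul_le_mul_right (aux_L2 h2δ (by linarith)) _
      _ ≤ ENNReal.ofReal (CC * M ^ β) := by
          rw [← ENNReal.ofReal_mul hc30]
          apply ENNReal.ofReal_le_ofReal
          have e1 : (2*M) ^ (2*δ+1) = 2 ^ (2*δ+1) * M ^ (2*δ+1) :=
            Real.mul_rpow (by norm_num) hMpos.le
          have e2 : M ^ (2*δ+1) ≤ M ^ β := by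
            apply Real.rpow_le_rpow_of_exponent_le hM1
            rw [hδdef]; linarith
          calc C₂ * C₂ / 2 ^ δ * (2 * (2*M) ^ (2*δ+1) / (-(2*δ+1)))
              = CC * M ^ (2*δ+1) := by
                rw [e1, hCCdef, hCC0def]; ring
            _ ≤ CC * M ^ β := mul_le_mul_of_nonneg_left e2 hCC0'
  -- assemble
  calc ∫⁻ s : ℝ, ENNReal.ofReal
          (|∑ p ∈ Finset.range (K + 1), a p * |(p : ℝ) - s| ^ H| ^ (α / 2) *
            |∑ p' ∈ Finset.range (K + 1),
                a p' * |(p' : ℝ) - s - (m : ℝ)| ^ H| ^ (α / 2))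
      = ∫⁻ s : ℝ, gE s * gE (s + (m:ℝ)) := lintegral_congr hinteq
    _ = ∫⁻ s in Set.univ, gE s * gE (s + (m:ℝ)) := by rw [setLIntegral_univ]
    _ ≤ ∫⁻ s in SA ∪ (SB ∪ SC), gE s * gE (s + (m:ℝ)) :=
        lintegral_mono_set fun s _ => hcover s
    _ ≤ (∫⁻ s in SA, gE s * gE (s + (m:ℝ))) + ∫⁻ s in SB ∪ SC, gE s * gE (s + (m:ℝ)) :=
        lintegral_union_le _ _ _
    _ ≤ (∫⁻ s in SA, gE s * gE (s + (m:ℝ))) +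
          ((∫⁻ s in SB, gE s * gE (s + (m:ℝ))) + ∫⁻ s in SC, gE s * gE (s + (m:ℝ))) :=
        add_le_add_right (lintegral_union_le _ _ _) _
    _ ≤ ENNReal.ofReal (CA * M ^ β) +
          (ENNReal.ofReal (CB * M ^ β) + ENNReal.ofReal (CC * M ^ β)) :=
        add_le_add hA (add_le_add hB hC)
    _ ≤ ENNReal.ofReal ((CA + CB + CC + 1) * M ^ β) := by
        rw [← ENNReal.ofReal_add (mul_nonneg hCB0 hMβ0) (mul_nonneg hCC0' hMβ0),
          ← ENNReal.ofReal_add (mul_nonneg hCA0 hMβ0)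
            (by positivity : (0:ℝ) ≤ CB * M ^ β + CC * M ^ β)]
        apply ENNReal.ofReal_le_ofReal
        have hre : (CA+CB+CC+1) * M ^ β = CA * M ^ β + (CB * M ^ β + CC * M ^ β) + M ^ β := by
          ring
        rw [hre]
        linarith [hMβ0]
end
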